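/- arXiv:2005.00471 — 5 statements merged into one kernel-verified Lean document; each statement's English description precedes it below -/
import Mathlib

section
/- For every forecasting system Φ there exists at least one path ω that is computably random for Φ. -/
open Filter

/-- A coherent lower expectation on a nonempty finite sample space `X`. -/
def IsCoherent {X : Type} [Fintype X] [Nonempty X] (E : (X → ℝ) → ℝ) : Prop :=
  (∀ f : X → ℝ, Finset.univ.inf' Finset.univ_nonempty f ≤ E f) ∧
  (∀ (f : X → ℝ) (α : ℝ), 0 ≤ α → E (fun x => α * f x) = α * E f) ∧
  (∀ f g : X → ℝ, E f + E g ≤ E (fun x => f x + g x))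

/-- The conjugate upper expectation. -/
noncomputable def upperE {X : Type} (E : (X → ℝ) → ℝ) (f : X → ℝ) : ℝ :=
  -E (fun x => -f x)

/-- The process difference `ΔF(s)(x) = F(sx) − F(s)`. -/
noncomputable def procDiff {X : Type} (F : List X → ℝ) (s : List X) : X → ℝ :=
  fun x => F (s ++ [x]) - F s

/-- `M` is a supermartingale for the forecasting system `Φ`. -/
def IsSupermartingale {X : Type} (Φ : List X → (X → ℝ) → ℝ) (M : List X → ℝ) : Prop :=
  ∀ s : List X, upperE (Φ s) (procDiff M s) ≤ 0

/-- A real process is computable if some recursive net of rationals converges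
effectively to it. -/
def ComputableProcess {X : Type} [Primcodable X] (F : List X → ℝ) : Prop :=
  ∃ r : List X × ℕ → ℚ, Computable r ∧
    ∀ (s : List X) (n N : ℕ), N ≤ n → |(r (s, n) : ℝ) - F s| ≤ (2 : ℝ) ^ (-(N : ℤ))

/-- The length-`n` prefix `ω^n` of a path `ω`. -/
def prefixOf {X : Type} (ω : ℕ → X) (n : ℕ) : List X := (List.range n).map ω

/-- A path `ω` is computably random for the forecasting system `Φ` if every
computable nonnegative supermartingale for `Φ` is bounded above along `ω`. -/
def ComputablyRandom {X : Type} [Fintype X] [Nonempty X] [Primcodable X]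
    (Φ : List X → (X → ℝ) → ℝ) (ω : ℕ → X) : Prop :=
  ∀ M : List X → ℝ, ComputableProcess M → (∀ s, 0 ≤ M s) →
    IsSupermartingale Φ M → BddAbove (Set.range fun n => M (prefixOf ω n))

/-- A computable real number. -/
def ComputableReal (x : ℝ) : Prop :=
  ∃ r : ℕ → ℚ, Computable r ∧ ∀ n : ℕ, |(r n : ℝ) - x| ≤ (2 : ℝ) ^ (-(n : ℤ))

lemma computable_countable {α β : Type} [Primcodable α] [Primcodable β] :
    {f : α → β | Computable f}.Countable := by
  rw [Set.countable_iff_exists_injective]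
  choose c hc using fun f : {f : α → β | Computable f} =>
    Nat.Partrec.Code.exists_code.mp f.2
  refine ⟨fun f => Encodable.encode (c f), fun f g h => ?_⟩
  have h' : c f = c g := Encodable.encode_injective h
  have he := (hc f).symm.trans (h' ▸ hc g)
  apply Subtype.ext; funext a
  have h2 := congrFun he (Encodable.encode a)
  simp [Encodable.encodek] at h2
  exact h2

lemma compProc_countable {X : Type} [Primcodable X] :
    {F : List X → ℝ | ComputableProcess F}.Countable := by
  have h1 : {r : List X × ℕ → ℚ | Computable r}.Countable := computable_countable
  rw [Set.countable_iff_exists_injective]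
  choose r hr hle using fun F : {F : List X → ℝ | ComputableProcess F} => F.2
  obtain ⟨e, he⟩ := Set.countable_iff_exists_injective.mp h1
  refine ⟨fun F => e ⟨r F, hr F⟩, fun F G h => ?_⟩
  have hrFG : r F = r G := congrArg Subtype.val (he h)
  apply Subtype.ext; funext s
  have key : ∀ N : ℕ, |F.1 s - G.1 s| ≤ 2 * (2:ℝ)^(-(N:ℤ)) := by
    intro N
    have h1 := hle F s N N le_rfl
    have h2 := hle G s N N le_rfl
    rw [hrFG] at h1
    calc |F.1 s - G.1 s|
        = |((r G (s,N) : ℝ) - G.1 s) - ((r G (s,N) : ℝ) - F.1 s)| := by ring_nf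
      _ ≤ |(r G (s,N) : ℝ) - G.1 s| + |(r G (s,N) : ℝ) - F.1 s| := abs_sub _ _
      _ ≤ 2 * (2:ℝ)^(-(N:ℤ)) := by linarith
  by_contra hne
  have hd : 0 < |F.1 s - G.1 s| := abs_pos.mpr (sub_ne_zero.mpr hne)
  obtain ⟨N, hN⟩ := exists_pow_lt_of_lt_one (by linarith : (0:ℝ) < |F.1 s - G.1 s| / 2)
    (by norm_num : (1/2 : ℝ) < 1)
  have hz : (2:ℝ)^(-(N:ℤ)) = (1/2:ℝ)^N := by
    rw [zpow_neg, zpow_natCast, one_div, inv_pow]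
  have h3 := key N
  rw [hz] at h3
  linarith

lemma coherent_zero {X : Type} [Fintype X] [Nonempty X] {E : (X → ℝ) → ℝ}
    (hE : IsCoherent E) : E (fun _ => 0) = 0 := by
  have := hE.2.1 (fun _ => 0) 0 le_rfl
  simpa using this

lemma exists_step {X : Type} [Fintype X] [Nonempty X] {E : (X → ℝ) → ℝ}
    (hE : IsCoherent E) {f : X → ℝ} (h : upperE E f ≤ 0) : ∃ x, f x ≤ 0 := by
  have hE0 : E (fun _ => 0) = 0 := coherent_zero hE
  have h1 : E f + E (fun x => -f x) ≤ 0 := by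
    have := hE.2.2 f (fun x => -f x)
    simpa [hE0] using this
  have h2 : E f ≤ upperE E f := by unfold upperE; linarith
  have h3 := hE.1 f
  obtain ⟨x, _, hx⟩ := Finset.exists_mem_eq_inf' Finset.univ_nonempty f
  refine ⟨x, ?_⟩
  rw [← hx]
  linarith

lemma upperE_add_le {X : Type} [Fintype X] [Nonempty X] {E : (X → ℝ) → ℝ}
    (hE : IsCoherent E) (f g : X → ℝ) :
    upperE E (fun x => f x + g x) ≤ upperE E f + upperE E g := by
  have h2 : E (fun x => -f x) + E (fun x => -g x) ≤ E (fun x => -(f x + g x)) := by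
    have h := hE.2.2 (fun x => -f x) (fun x => -g x)
    have he : (fun x => -f x + -g x) = (fun x => -(f x + g x)) := funext fun x => by ring
    rw [he] at h
    exact h
  unfold upperE
  linarith

lemma upperE_smul {X : Type} [Fintype X] [Nonempty X] {E : (X → ℝ) → ℝ}
    (hE : IsCoherent E) (f : X → ℝ) {c : ℝ} (hc : 0 ≤ c) :
    upperE E (fun x => c * f x) = c * upperE E f := by
  unfold upperE
  rw [show (fun x => -(c * f x)) = fun x => c * -f x from funext fun x => by ring,
    hE.2.1 (fun x => -f x) c hc]
  ring

lemma exists_path {X : Type} [Fintype X] [Nonempty X] {Φ : List X → (X → ℝ) → ℝ}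
    (hΦ : ∀ s, IsCoherent (Φ s)) {T : List X → ℝ} (hT : IsSupermartingale Φ T) :
    ∃ ω : ℕ → X, ∀ n, T (prefixOf ω n) ≤ T [] := by
  have step : ∀ s : List X, ∃ x, T (s ++ [x]) ≤ T s := by
    intro s
    obtain ⟨x, hx⟩ := exists_step (hΦ s) (hT s)
    refine ⟨x, ?_⟩
    unfold procDiff at hx
    linarith
  choose g hg using step
  let ps : ℕ → List X := fun n => Nat.rec [] (fun _ s => s ++ [g s]) n
  refine ⟨fun n => g (ps n), fun n => ?_⟩
  have hps : ∀ m, prefixOf (fun n => g (ps n)) m = ps m := by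
    intro m
    induction m with
    | zero => rfl
    | succ m ih =>
      show prefixOf _ (m+1) = ps m ++ [g (ps m)]
      unfold prefixOf at ih ⊢
      rw [List.range_succ, List.map_append, ih]
      rfl
  rw [hps]
  induction n with
  | zero => exact le_rfl
  | succ n ih => exact le_trans (hg (ps n)) ih

/-- Every forecasting system has at least one computably random path. -/
theorem stmt_1 {X : Type} [Fintype X] [Nonempty X] [Primcodable X]
    (Φ : List X → (X → ℝ) → ℝ) (hΦ : ∀ s, IsCoherent (Φ s)) :
    ∃ ω : ℕ → X, ComputablyRandom Φ ω := by
  classical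
  set Good : Set (List X → ℝ) :=
    {F | ComputableProcess F ∧ (∀ s, 0 ≤ F s) ∧ IsSupermartingale Φ F} with hGood
  have hGc : Good.Countable := compProc_countable.mono fun F hF => hF.1
  have hzero_sm : IsSupermartingale Φ (fun _ => (0:ℝ)) := by
    intro s
    have : procDiff (fun _ => (0:ℝ)) s = fun _ => 0 := by
      funext x; simp [procDiff]
    rw [this]
    unfold upperE
    simp [coherent_zero (hΦ s)]
  have hGne : Good.Nonempty := by
    refine ⟨fun _ => 0, ⟨⟨fun _ => 0, Computable.const 0, ?_⟩, fun s => le_rfl, hzero_sm⟩⟩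
    intro s n N _
    simp
  obtain ⟨M, hM⟩ := hGc.exists_eq_range hGne
  have hMk : ∀ k, M k ∈ Good := fun k => hM ▸ Set.mem_range_self k
  have hMnn : ∀ k s, 0 ≤ M k s := fun k => (hMk k).2.1
  have hMsm : ∀ k, IsSupermartingale Φ (M k) := fun k => (hMk k).2.2
  set c : ℕ → ℝ := fun k => (1/2:ℝ)^(k+1) / (1 + M k []) with hc
  have hc_pos : ∀ k, 0 < c k := fun k =>
    div_pos (by positivity) (by linarith [hMnn k []])
  set S : ℕ → List X → ℝ := fun K s => ∑ k ∈ Finset.range K, c k * M k s with hS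
  have hSnn : ∀ K s, 0 ≤ S K s := fun K s =>
    Finset.sum_nonneg fun k _ => mul_nonneg (hc_pos k).le (hMnn k s)
  have hSinit : ∀ K, S K [] ≤ 1 := by
    intro K
    have h1 : ∀ k, c k * M k [] ≤ (1/2:ℝ)^(k+1) := by
      intro k
      rw [hc]
      rw [div_mul_eq_mul_div, div_le_iff₀ (by linarith [hMnn k [] ] : (0:ℝ) < 1 + M k [])]
      have : (0:ℝ) ≤ (1/2:ℝ)^(k+1) := by positivity
      nlinarith [hMnn k []]
    calc S K [] ≤ ∑ k ∈ Finset.range K, (1/2:ℝ)^(k+1) :=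
          Finset.sum_le_sum fun k _ => h1 k
      _ = (1/2) * ∑ k ∈ Finset.range K, (1/2:ℝ)^k := by
          rw [Finset.mul_sum]; congr 1; funext k; ring
      _ ≤ (1/2) * 2 := by
          have := sum_geometric_two_le K
          linarith
      _ = 1 := by norm_num
  have hSsm : ∀ K, IsSupermartingale Φ (S K) := by
    intro K
    induction K with
    | zero =>
      have : S 0 = fun _ => (0:ℝ) := by funext s; simp [hS]
      rw [this]; exact hzero_sm
    | succ K ih =>
      intro s
      have heq : procDiff (S (K+1)) s =
          fun x => procDiff (S K) s x + (fun y => c K * procDiff (M K) s y) x := by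
        funext x
        simp only [procDiff, hS, Finset.sum_range_succ]
        try ring
      rw [heq]
      have h1 := upperE_add_le (hΦ s) (procDiff (S K) s) (fun y => c K * procDiff (M K) s y)
      have h2 := upperE_smul (hΦ s) (procDiff (M K) s) (hc_pos K).le
      have h3 := ih s
      have h4 := hMsm K s
      nlinarith [hc_pos K]
  -- topology
  letI : TopologicalSpace X := ⊥
  haveI : DiscreteTopology X := ⟨rfl⟩
  letI : TopologicalSpace (List X) := ⊥
  haveI : DiscreteTopology (List X) := ⟨rfl⟩
  haveI : CompactSpace X := Finite.compactSpace
  have hcont : ∀ n : ℕ, Continuous (fun ω : ℕ → X => prefixOf ω n) := by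
    intro n
    induction n with
    | zero => exact continuous_const
    | succ n ih =>
      have h1 : Continuous (fun ω : ℕ → X => (prefixOf ω n, ω n)) :=
        ih.prodMk (continuous_apply n)
      have h2 : Continuous (fun p : List X × X => p.1 ++ [p.2]) :=
        continuous_of_discreteTopology
      have heq : (fun ω : ℕ → X => prefixOf ω (n+1)) =
          (fun p : List X × X => p.1 ++ [p.2]) ∘ (fun ω => (prefixOf ω n, ω n)) := by
        funext ω
        simp [prefixOf, List.range_succ]
      rw [heq]
      exact h2.comp h1
  set A : ℕ → Set (ℕ → X) := fun K => {ω | ∀ n, S K (prefixOf ω n) ≤ 1} with hA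
  have hAne : ∀ K, (A K).Nonempty := by
    intro K
    obtain ⟨ω, hω⟩ := exists_path hΦ (hSsm K)
    exact ⟨ω, fun n => le_trans (hω n) (hSinit K)⟩
  have hAsub : ∀ K, A (K+1) ⊆ A K := by
    intro K ω hω n
    have h1 := hω n
    have h2 : S K (prefixOf ω n) ≤ S (K+1) (prefixOf ω n) := by
      simp only [hS, Finset.sum_range_succ]
      have := mul_nonneg (hc_pos K).le (hMnn K (prefixOf ω n))
      linarith
    linarith
  have hAcl : ∀ K, IsClosed (A K) := by
    intro K
    have : A K = ⋂ n, (fun ω : ℕ → X => prefixOf ω n) ⁻¹' {l | S K l ≤ 1} := by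
      ext ω; simp [hA, Set.mem_iInter]
    rw [this]
    exact isClosed_iInter fun n => (isClosed_discrete _).preimage (hcont n)
  obtain ⟨ω, hω⟩ := IsCompact.nonempty_iInter_of_sequence_nonempty_isCompact_isClosed
    A hAsub hAne ((hAcl 0).isCompact) hAcl
  refine ⟨ω, fun N hNc hNnn hNsm => ?_⟩
  have hNG : N ∈ Good := ⟨hNc, hNnn, hNsm⟩
  rw [hM] at hNG
  obtain ⟨k, hk⟩ := hNG
  refine ⟨1 / c k, ?_⟩
  rintro y ⟨n, rfl⟩
  have h1 : S (k+1) (prefixOf ω n) ≤ 1 := (Set.mem_iInter.mp hω (k+1)) n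
  have h2 : c k * M k (prefixOf ω n) ≤ S (k+1) (prefixOf ω n) := by
    apply Finset.single_le_sum (f := fun i => c i * M i (prefixOf ω n))
    · exact fun i _ => mul_nonneg (hc_pos i).le (hMnn i (prefixOf ω n))
    · exact Finset.self_mem_range_succ k
  simp only
  rw [← hk]
  rw [le_div_iff₀ (hc_pos k)]
  nlinarith
end

section
/- For every coherent lower expectation E on X, there is at least one path ω that is computably random for E. -/
open Filter

section aux
variable {X : Type} [Fintype X] [Nonempty X] {E : (X → ℝ) → ℝ} (hE : IsCoherent E)
include hE

lemma E_zero : E (fun _ => 0) = 0 := by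
  have h := hE.2.1 (fun _ => (0:ℝ)) 0 le_rfl
  simpa using h

lemma E_le_upperE (f : X → ℝ) : E f ≤ upperE E f := by
  have h := hE.2.2 f (fun x => -f x)
  have h2 : (fun x => f x + -f x) = fun _ : X => (0:ℝ) := by funext x; ring
  rw [h2, E_zero hE] at h
  unfold upperE; linarith

lemma step_exists {T : List X → ℝ} (hT : IsSupermartingale (fun _ => E) T) (s : List X) :
    ∃ x, T (s ++ [x]) ≤ T s := by
  obtain ⟨x, _, hx⟩ := Finset.exists_mem_eq_inf' (Finset.univ_nonempty (α := X)) (procDiff T s)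
  have h1 : procDiff T s x ≤ 0 := by
    have := (hx ▸ hE.1 (procDiff T s)).trans ((E_le_upperE hE _).trans (hT s))
    linarith [hE.1 (procDiff T s), hx ▸ le_refl (Finset.univ.inf' Finset.univ_nonempty (procDiff T s))]
  exact ⟨x, by have := h1; simp only [procDiff] at this; linarith⟩

lemma superm_zero : IsSupermartingale (fun _ => E) (fun _ => 0) := by
  intro s
  have h1 : procDiff (fun _ : List X => (0:ℝ)) s = fun _ => 0 := by
    funext x; simp [procDiff]
  have h2 : (fun x : X => -(0:ℝ)) = fun _ => (0:ℝ) := by funext x; ring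
  show upperE E (procDiff (fun _ => (0:ℝ)) s) ≤ 0
  rw [h1]; unfold upperE; rw [h2, E_zero hE]; simp

lemma superm_add_smul {c : ℝ} (hc : 0 ≤ c) {M N : List X → ℝ}
    (hM : IsSupermartingale (fun _ => E) M) (hN : IsSupermartingale (fun _ => E) N) :
    IsSupermartingale (fun _ => E) (fun s => c * M s + N s) := by
  intro s
  have hd : procDiff (fun s => c * M s + N s) s
      = fun x => c * procDiff M s x + procDiff N s x := by
    funext x; simp only [procDiff]; ring
  rw [hd]
  set f := procDiff M s
  set g := procDiff N s
  have hsub := hE.2.2 (fun x => -(c * f x)) (fun x => -(g x))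
  have hhom := hE.2.1 (fun x => -(f x)) c hc
  have he1 : (fun x => c * -(f x)) = fun x => -(c * f x) := by funext x; ring
  rw [he1] at hhom
  have he2 : (fun x => -(c * f x) + -(g x)) = fun x => -((c * f x) + g x) := by
    funext x; ring
  rw [he2] at hsub
  have hMf : 0 ≤ E (fun x => -(f x)) := by
    have := hM s; unfold upperE at this
    simpa [f] using by linarith [this]
  have hNg : 0 ≤ E (fun x => -(g x)) := by
    have := hN s; unfold upperE at this; linarith
  unfold upperE
  have : 0 ≤ E (fun x => -(c * f x + g x)) := by nlinarith
  linarith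

lemma superm_sum {c : ℕ → ℝ} (hc : ∀ k, 0 ≤ c k) {M : ℕ → List X → ℝ}
    (hM : ∀ k, IsSupermartingale (fun _ => E) (M k)) (n : ℕ) :
    IsSupermartingale (fun _ => E) (fun s => ∑ k ∈ Finset.range n, c k * M k s) := by
  induction n with
  | zero => simpa using superm_zero hE
  | succ n ih =>
      have h := superm_add_smul hE (hc n) (hM n) ih
      have he : (fun s => ∑ k ∈ Finset.range (n+1), c k * M k s)
          = fun s => c n * M n s + ∑ k ∈ Finset.range n, c k * M k s := by
        funext s; rw [Finset.sum_range_succ]; ring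
      rw [he]; exact h

lemma exists_path_s5 {T : List X → ℝ} (hT : IsSupermartingale (fun _ => E) T) :
    ∃ ω : ℕ → X, ∀ m, T (prefixOf ω m) ≤ T [] := by
  classical
  choose g hg using step_exists hE hT
  let p : ℕ → List X := fun m => Nat.rec [] (fun _ s => s ++ [g s]) m
  have hp : ∀ m, p (m+1) = p m ++ [g (p m)] := fun m => rfl
  have hlen : ∀ m, (p m).length = m := by
    intro m; induction m with
    | zero => rfl
    | succ m ih => rw [hp]; simp [ih]
  let ω : ℕ → X := fun n => (p (n+1)).getD n (Classical.arbitrary X)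
  have hω : ∀ m, ω m = g (p m) := by
    intro m
    show (p (m+1)).getD m _ = g (p m)
    have h : (p m ++ [g (p m)])[(p m).length]? = some (g (p m)) := List.getElem?_concat_length
    rw [hlen] at h
    rw [hp m, List.getD_eq_getElem?_getD, h]
    rfl
  have hpre : ∀ m, prefixOf ω m = p m := by
    intro m; induction m with
    | zero => rfl
    | succ m ih =>
        unfold prefixOf
        rw [List.range_succ, List.map_append]
        unfold prefixOf at ih
        rw [ih, hp, List.map_singleton, hω]
  refine ⟨ω, fun m => ?_⟩
  rw [hpre]
  induction m with
  | zero => exact le_rfl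
  | succ m ih => rw [hp]; exact (hg (p m)).trans ih

end aux

lemma countable_computable {α β : Type} [Primcodable α] [Primcodable β] [Inhabited β] :
    {f : α → β | Computable f}.Countable := by
  classical
  let h : Nat.Partrec.Code → α → β := fun c a =>
    if hd : (c.eval (Encodable.encode a)).Dom then
      (Encodable.decode ((c.eval (Encodable.encode a)).get hd)).getD default
    else default
  apply Set.Countable.mono _ (Set.countable_range h)
  intro f hf
  obtain ⟨c, hc⟩ := Nat.Partrec.Code.exists_code.1 hf
  refine ⟨c, ?_⟩
  funext a
  have he : c.eval (Encodable.encode a) = Part.some (Encodable.encode (f a)) := by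
    rw [hc]
    simp [Encodable.encodek]
  simp only [h, he]
  simp

lemma two_zpow_tendsto : Tendsto (fun n : ℕ => (2:ℝ) ^ (-(n:ℤ))) atTop (nhds 0) := by
  have h : ∀ n : ℕ, (2:ℝ) ^ (-(n:ℤ)) = (2⁻¹ : ℝ) ^ n := by
    intro n
    rw [zpow_neg, ← inv_zpow, zpow_natCast]
  simp only [h]
  exact tendsto_pow_atTop_nhds_zero_of_lt_one (by norm_num) (by norm_num)

lemma countable_proc {X : Type} [Primcodable X] :
    {M : List X → ℝ | ComputableProcess M}.Countable := by
  have h1 : {r : List X × ℕ → ℚ | Computable r}.Countable := countable_computable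
  apply Set.Countable.mono _
    (h1.image (fun r => fun s : List X => limUnder atTop (fun n => ((r (s, n)) : ℝ))))
  rintro M ⟨r, hr, hb⟩
  refine ⟨r, hr, ?_⟩
  funext s
  have ht0 : Tendsto (fun n => ((r (s, n)) : ℝ) - M s) atTop (nhds 0) :=
    squeeze_zero_norm (fun n => by simpa using hb s n n le_rfl) two_zpow_tendsto
  have ht : Tendsto (fun n => ((r (s, n)) : ℝ)) atTop (nhds (M s)) := by
    have := ht0.add_const (M s)
    simpa using this
  exact ht.limUnder_eq


/-- Every coherent lower expectation has at least one computably
random path (w.r.t. the associated stationary forecasting system). -/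
theorem stmt_5 {X : Type} [Fintype X] [Nonempty X] [Primcodable X]
    (E : (X → ℝ) → ℝ) (hE : IsCoherent E) :
    ∃ ω : ℕ → X, ComputablyRandom (fun _ : List X => E) ω := by
  classical
  set 𝒮 : Set (List X → ℝ) :=
    {M | ComputableProcess M ∧ (∀ s, 0 ≤ M s) ∧ IsSupermartingale (fun _ => E) M} with h𝒮
  have hcount : (insert (fun _ : List X => (0:ℝ)) 𝒮).Countable :=
    ((countable_proc).mono (fun M hM => hM.1)).insert _
  obtain ⟨e, he⟩ := Set.Countable.exists_eq_range hcount ⟨_, Set.mem_insert _ _⟩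
  have hek : ∀ k, (∀ s, 0 ≤ e k s) ∧ IsSupermartingale (fun _ => E) (e k) := by
    intro k
    have hmem : e k ∈ insert (fun _ : List X => (0:ℝ)) 𝒮 := he ▸ Set.mem_range_self k
    rcases Set.mem_insert_iff.1 hmem with h0 | hm
    · rw [h0]; exact ⟨fun s => le_rfl, superm_zero hE⟩
    · exact ⟨hm.2.1, hm.2.2⟩
  set c : ℕ → ℝ := fun k => (2:ℝ) ^ (-(k:ℤ)) / (1 + e k []) with hcdef
  have hcpos : ∀ k, 0 < c k := fun k =>
    div_pos (by positivity) (by linarith [(hek k).1 []])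
  set T : ℕ → List X → ℝ := fun n s => ∑ k ∈ Finset.range n, c k * e k s with hTdef
  have hTs : ∀ n, IsSupermartingale (fun _ => E) (T n) :=
    fun n => superm_sum hE (fun k => (hcpos k).le) (fun k => (hek k).2) n
  have hT2 : ∀ n, T n [] ≤ 2 := by
    intro n
    have h1 : ∀ k ∈ Finset.range n, c k * e k [] ≤ (1/2:ℝ) ^ k := by
      intro k _
      have hm := (hek k).1 []
      have h2 : (2:ℝ) ^ (-(k:ℤ)) = (1/2:ℝ) ^ k := by
        rw [zpow_neg, ← inv_zpow, zpow_natCast]; norm_num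
      have hpow : (0:ℝ) ≤ (1/2:ℝ) ^ k := by positivity
      rw [hcdef]
      simp only
      rw [h2, div_mul_eq_mul_div, div_le_iff₀ (by linarith)]
      nlinarith
    calc T n [] ≤ ∑ k ∈ Finset.range n, (1/2:ℝ) ^ k := Finset.sum_le_sum h1
    _ ≤ 2 := sum_geometric_two_le n
  letI : TopologicalSpace X := ⊥
  haveI : DiscreteTopology X := ⟨rfl⟩
  set A : ℕ → Set (ℕ → X) := fun n => {ω | ∀ m, T n (prefixOf ω m) ≤ 2} with hA
  have hmono : ∀ n, A (n+1) ⊆ A n := by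
    intro n ω hω m
    have h1 := hω m
    have hterm : 0 ≤ c n * e n (prefixOf ω m) :=
      mul_nonneg (hcpos n).le ((hek n).1 _)
    have h2 : T (n+1) (prefixOf ω m) = T n (prefixOf ω m) + c n * e n (prefixOf ω m) := by
      simp only [hTdef]
      exact Finset.sum_range_succ _ n
    show T n (prefixOf ω m) ≤ 2
    have h1' : T (n+1) (prefixOf ω m) ≤ 2 := h1
    linarith
  have hclosed : ∀ n, IsClosed (A n) := by
    intro n
    have hAe : A n = ⋂ m, (fun ω : ℕ → X => T n (prefixOf ω m)) ⁻¹' Set.Iic 2 := by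
      ext ω
      simp only [hA, Set.mem_setOf_eq, Set.mem_iInter, Set.mem_preimage, Set.mem_Iic]
    rw [hAe]
    refine isClosed_iInter fun m => IsClosed.preimage ?_ isClosed_Iic
    have h1 : Continuous fun ω : ℕ → X => (fun i : Fin m => ω i) :=
      continuous_pi fun i => continuous_apply _
    have h2 : Continuous fun v : Fin m → X =>
        T n ((List.range m).map
          (fun i => if h : i < m then v ⟨i, h⟩ else Classical.arbitrary X)) :=
      continuous_of_discreteTopology
    have heq : (fun ω : ℕ → X => T n (prefixOf ω m))
        = (fun v : Fin m → X => T n ((List.range m).map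
            (fun i => if h : i < m then v ⟨i, h⟩ else Classical.arbitrary X)))
          ∘ (fun ω i => ω i) := by
      funext ω
      simp only [Function.comp_apply]
      congr 1
      unfold prefixOf
      refine (List.map_congr_left ?_).symm
      intro i hi
      rw [dif_pos (List.mem_range.1 hi)]
    rw [heq]
    exact h2.comp h1
  have hne : ∀ n, (A n).Nonempty := by
    intro n
    obtain ⟨ω, hω⟩ := exists_path_s5 hE (hTs n)
    exact ⟨ω, fun m => (hω m).trans (hT2 n)⟩
  obtain ⟨ω, hω⟩ := IsCompact.nonempty_iInter_of_sequence_nonempty_isCompact_isClosed A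
    hmono hne ((hclosed 0).isCompact) hclosed
  refine ⟨ω, ?_⟩
  intro M hMc hMn hMs
  have hmem : M ∈ insert (fun _ : List X => (0:ℝ)) 𝒮 :=
    Set.mem_insert_iff.2 (Or.inr ⟨hMc, hMn, hMs⟩)
  rw [he] at hmem
  obtain ⟨k, hk⟩ := hmem
  refine ⟨2 / c k, ?_⟩
  rintro y ⟨m, rfl⟩
  have h1 : c k * e k (prefixOf ω m) ≤ T (k+1) (prefixOf ω m) :=
    Finset.single_le_sum (f := fun j => c j * e j (prefixOf ω m))
      (fun j _ => mul_nonneg (hcpos j).le ((hek j).1 _)) (Finset.self_mem_range_succ k)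
  have h2 : T (k+1) (prefixOf ω m) ≤ 2 := (Set.mem_iInter.1 hω (k+1)) m
  rw [← hk, le_div_iff₀ (hcpos k)]
  calc e k (prefixOf ω m) * c k = c k * e k (prefixOf ω m) := mul_comm _ _
  _ ≤ 2 := h1.trans h2
end

section
/- Let Φ be a forecasting system, let B > 0 and 0 < ξ < 1/B be reals, let S : S → {0,1} be a selection process, and let M be a submartingale for Φ (i.e., E_s(ΔM(s)) ≥ 0 for all situations s) with |ΔM(s)(x)| ≤ B for all s and x. Define the real process F_M by F_M(x_{1:n}) := Π_{k=0}^{n−1} [1 − ξ·S(x_{1:k})·ΔM(x_{1:k})(x_{k+1})] for all n ∈ ℕ and all situations x_{1:n}. Then: (1) F_M is a positive supermartingale for Φ with F_M(□) = 1; (2) if moreover ξ = ε/(2B²) for some real 0 < ε < B, then for all n and all situations x_{1:n}: ⟨M⟩_S(x_{1:n}) ≤ −ε implies F_M(x_{1:n}) ≥ exp( (ε²/(4B²))·Σ_{k=0}^{n−1} S(x_{1:k}) ), where ⟨M⟩_S(x_{1:n}) := [Σ_{k=0}^{n−1} S(x_{1:k})·ΔM(x_{1:k})(x_{k+1})] /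 [Σ_{k=0}^{n−1} S(x_{1:k})] if Σ_{k=0}^{n−1} S(x_{1:k}) > 0 and ⟨M⟩_S(x_{1:n}) := 0 otherwise; (3) if ξ is a computable real, the selection process S is computable, and for each x ∈ X the real process s ↦ ΔM(s)(x) is computable, then F_M is a computable real process. -/
open Filter

namespace Stmt17Aux

lemma exp_factor_le {t : ℝ} (ht : |t| ≤ 1/2) : Real.exp (-t - t^2) ≤ 1 - t := by
  obtain ⟨h1, h2⟩ := abs_le.1 ht
  have hE : Real.exp (-t - t^2) * Real.exp (t + t^2) = 1 := by
    rw [← Real.exp_add]; ring_nf; exact Real.exp_zero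
  rcases le_total t 0 with h0 | h0
  · have he : 1 + (t + t^2) ≤ Real.exp (t + t^2) := by
      have := Real.add_one_le_exp (t + t^2); linarith
    have h₁ : 1 ≤ (1 - t) * Real.exp (t + t^2) := by nlinarith
    nlinarith [Real.exp_pos (t + t^2)]
  · have he : 1 + (t + t^2) + (t + t^2)^2/2 ≤ Real.exp (t + t^2) := by
      have h3 := Real.sum_le_exp_of_nonneg (by nlinarith : (0:ℝ) ≤ t + t^2) 3
      have hs : ∑ i ∈ Finset.range 3, (t + t^2) ^ i / (Nat.factorial i : ℝ)
          = 1 + (t + t^2) + (t + t^2)^2/2 := by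
        simp [Finset.sum_range_succ, Nat.factorial]
      rw [hs] at h3; exact h3
    have a1 : t^2 ≤ t/2 := by nlinarith
    have a2 : t^3 ≤ t/4 := by nlinarith
    have a3 : (0:ℝ) ≤ 1 - t - t^2 - t^3 := by nlinarith
    have hpoly : 1 ≤ (1 - t) * (1 + (t + t^2) + (t + t^2)^2/2) := by
      nlinarith [mul_nonneg (sq_nonneg t) a3]
    have h₁ : 1 ≤ (1 - t) * Real.exp (t + t^2) := by nlinarith [Real.exp_pos (t + t^2)]
    nlinarith [Real.exp_pos (t + t^2)]

lemma abs_prod_le {L : ℕ} {f : ℕ → ℝ} {A : ℝ} (hA : 1 ≤ A) (hf : ∀ k < L, |f k| ≤ A) :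
    |∏ k ∈ Finset.range L, f k| ≤ A ^ L := by
  induction L with
  | zero => simpa using le_refl (1:ℝ)
  | succ n ih =>
      rw [Finset.prod_range_succ, abs_mul, pow_succ]
      exact mul_le_mul (ih fun k hk => hf k (hk.trans (Nat.lt_succ_self n)))
        (hf n (Nat.lt_succ_self n)) (abs_nonneg _) (by positivity)

lemma abs_prod_sub_prod_le {L : ℕ} {f g : ℕ → ℝ} {A δ : ℝ} (hA : 1 ≤ A) (hδ : 0 ≤ δ)
    (hf : ∀ k < L, |f k| ≤ A) (hg : ∀ k < L, |g k| ≤ A)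
    (hfg : ∀ k < L, |f k - g k| ≤ δ) :
    |∏ k ∈ Finset.range L, f k - ∏ k ∈ Finset.range L, g k| ≤ L * A ^ L * δ := by
  induction L with
  | zero => simp
  | succ n ih =>
      have hf' : ∀ k < n, |f k| ≤ A := fun k hk => hf k (hk.trans (Nat.lt_succ_self n))
      have hg' : ∀ k < n, |g k| ≤ A := fun k hk => hg k (hk.trans (Nat.lt_succ_self n))
      have ihn := ih hf' hg' fun k hk => hfg k (hk.trans (Nat.lt_succ_self n))
      rw [Finset.prod_range_succ, Finset.prod_range_succ]
      have key : (∏ k ∈ Finset.range n, f k) * f n - (∏ k ∈ Finset.range n, g k) * g n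
          = (∏ k ∈ Finset.range n, f k - ∏ k ∈ Finset.range n, g k) * f n
            + (∏ k ∈ Finset.range n, g k) * (f n - g n) := by ring
      rw [key]
      have h1 : |(∏ k ∈ Finset.range n, f k - ∏ k ∈ Finset.range n, g k) * f n|
          ≤ (n * A ^ n * δ) * A := by
        rw [abs_mul]
        exact mul_le_mul ihn (hf n (Nat.lt_succ_self n)) (abs_nonneg _)
          (by positivity)
      have h2 : |(∏ k ∈ Finset.range n, g k) * (f n - g n)| ≤ A ^ n * δ := by
        rw [abs_mul]
        exact mul_le_mul (abs_prod_le hA hg') (hfg n (Nat.lt_succ_self n)) (abs_nonneg _)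
          (by positivity)
      calc |(∏ k ∈ Finset.range n, f k - ∏ k ∈ Finset.range n, g k) * f n
            + (∏ k ∈ Finset.range n, g k) * (f n - g n)|
          ≤ (n * A ^ n * δ) * A + A ^ n * δ := (abs_add_le _ _).trans (add_le_add h1 h2)
        _ ≤ (n + 1 : ℕ) * A ^ (n+1) * δ := by
            push_cast
            have hn0 : (0:ℝ) ≤ (n:ℝ) := Nat.cast_nonneg n
            have hprod : (0:ℝ) ≤ A ^ n * δ * (A - 1) :=
              mul_nonneg (mul_nonneg (by positivity) hδ) (by linarith)
            rw [pow_succ]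
            nlinarith [hprod]

lemma one_le_two_pow {n : ℕ} : (1:ℝ) ≤ 2 ^ n := by
  simpa using pow_le_pow_left₀ (by norm_num : (0:ℝ) ≤ 1) (by norm_num : (1:ℝ) ≤ 2) n

lemma abs_sub_le' (a b : ℝ) : |a - b| ≤ |a| + |b| := by
  rw [sub_eq_add_neg]
  exact (abs_add_le _ _).trans (by rw [abs_neg])

abbrev Tri : Type := ℕ × ℕ × ℕ

def tmul (t u : Tri) : Tri :=
  (t.1 * u.1 + t.2.1 * u.2.1, t.1 * u.2.1 + t.2.1 * u.1, t.2.2 * u.2.2)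

def toneSub (t : Tri) : Tri := (t.2.2 + t.2.1, t.1, t.2.2)

def tnat (n : ℕ) : Tri := (n, 0, 1)

noncomputable def tval (t : Tri) : ℝ := ((t.1 : ℝ) - t.2.1) / t.2.2

def tRat (t : Tri) : ℚ := ((t.1 : ℚ) - t.2.1) / t.2.2

def ratTri (y : ℚ) : Tri := (y.num.toNat, (-y.num).toNat, y.den)

lemma tval_tmul (t u : Tri) : tval (tmul t u) = tval t * tval u := by
  simp only [tval, tmul]
  rw [div_mul_div_comm]
  push_cast
  congr 1
  ring

lemma tval_toneSub (t : Tri) (h : t.2.2 ≠ 0) : tval (toneSub t) = 1 - tval t := by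
  have h' : (t.2.2 : ℝ) ≠ 0 := Nat.cast_ne_zero.2 h
  simp only [tval, toneSub]
  field_simp
  push_cast
  ring

lemma tval_tnat (n : ℕ) : tval (tnat n) = n := by simp [tval, tnat]

lemma tval_ratTri (y : ℚ) : tval (ratTri y) = (y : ℝ) := by
  have h : (y.num.toNat : ℤ) - ((-y.num).toNat : ℤ) = y.num := by omega
  simp only [tval, ratTri]
  rw [Rat.cast_def]
  congr 1
  exact_mod_cast congrArg (fun z : ℤ => (z : ℝ)) h

lemma tRat_cast (t : Tri) : ((tRat t : ℚ) : ℝ) = tval t := by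
  simp only [tRat, tval]
  push_cast
  rfl

/-! ### encodings -/

/-- The "original" encoding of `ℚ`. -/
def enc0 : ℚ → ℕ := @Encodable.encode ℚ Rat.instEncodable

lemma enc0_eq (y : ℚ) : enc0 y = Nat.pair (Encodable.encode y.num) y.den := rfl

lemma encode_int_ofNat (n : ℕ) : Encodable.encode (Int.ofNat n) = 2 * n := by
  simp [Encodable.encode]; rfl

lemma encode_int_negSucc (n : ℕ) : Encodable.encode (Int.negSucc n) = 2 * n + 1 := rfl

def natOfCode (c : ℕ) : ℕ := if c % 2 = 1 then 0 else c / 2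
def negOfCode (c : ℕ) : ℕ := if c % 2 = 1 then (c + 1) / 2 else 0
def absOfCode (c : ℕ) : ℕ := (c + 1) / 2

lemma code_spec (z : ℤ) :
    natOfCode (Encodable.encode z) = z.toNat ∧ negOfCode (Encodable.encode z) = (-z).toNat
      ∧ absOfCode (Encodable.encode z) = z.natAbs := by
  cases z with
  | ofNat n =>
      rw [encode_int_ofNat]
      have hc : ¬ (2 * n) % 2 = 1 := by omega
      refine ⟨?_, ?_, ?_⟩
      · rw [natOfCode, if_neg hc]
        simp only [Int.ofNat_eq_coe, Int.toNat_natCast]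
        omega
      · rw [negOfCode, if_neg hc]
        simp only [Int.ofNat_eq_coe]
        omega
      · rw [absOfCode]
        simp only [Int.ofNat_eq_coe, Int.natAbs_natCast]
        omega
  | negSucc n =>
      rw [encode_int_negSucc]
      have hc : (2 * n + 1) % 2 = 1 := by omega
      have he : Int.negSucc n = -(n + 1 : ℕ) := Int.negSucc_eq n
      refine ⟨?_, ?_, ?_⟩
      · rw [natOfCode, if_pos hc]
        rw [he]; omega
      · rw [negOfCode, if_pos hc]
        rw [he]; omega
      · rw [absOfCode, he]; omega

/-! ### a primrec gcd -/

def gcdStep : ℕ × ℕ → ℕ × ℕ := fun p => if p.1 = 0 then p else (p.2 % p.1, p.1)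

lemma gcdStep_iter_spec : ∀ (n : ℕ) (p : ℕ × ℕ), p.1 ≤ n →
    (gcdStep^[n] p).2 = Nat.gcd p.1 p.2 := by
  intro n
  induction n with
  | zero =>
      intro p hp
      have h1 : p.1 = 0 := Nat.le_zero.mp hp
      simp [h1, Nat.gcd_comm]
  | succ n ih =>
      intro p hp
      rw [Function.iterate_succ_apply]
      by_cases h0 : p.1 = 0
      · rw [gcdStep, if_pos h0]
        rw [ih p (by omega)]
      · rw [gcdStep, if_neg h0]
        have hlt : p.2 % p.1 < p.1 := Nat.mod_lt _ (Nat.pos_of_ne_zero h0)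
        rw [ih _ (by simp; omega)]
        exact (Nat.gcd_rec p.1 p.2).symm

def myGcd (a b : ℕ) : ℕ := (gcdStep^[a] (a, b)).2

lemma myGcd_eq (a b : ℕ) : myGcd a b = Nat.gcd a b := gcdStep_iter_spec a (a, b) le_rfl

lemma primrec_gcdStep : Primrec gcdStep :=
  Primrec.ite (Primrec.eq.comp Primrec.fst (Primrec.const 0)) Primrec.id
    (Primrec.pair (Primrec.nat_mod.comp Primrec.snd Primrec.fst) Primrec.fst)

lemma primrec_myGcd : Primrec₂ myGcd := by
  have h : Primrec fun p : ℕ × ℕ => (gcdStep^[p.1] p).2 :=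
    Primrec.snd.comp
      (Primrec.nat_iterate Primrec.fst Primrec.id (primrec_gcdStep.comp Primrec.snd).to₂)
  exact Primrec₂.mk (h.of_eq fun p => rfl)

/-! ### valid codes and rank -/

def validB (m : ℕ) : Bool :=
  decide (0 < m.unpair.2 ∧ myGcd (absOfCode m.unpair.1) m.unpair.2 = 1)

lemma valid_iff (m : ℕ) : validB m = true ↔ m ∈ Set.range enc0 := by
  constructor
  · intro h
    simp only [validB, decide_eq_true_eq] at h
    obtain ⟨hd, hg⟩ := h
    rw [myGcd_eq] at hg
    set c := m.unpair.1 with hc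
    set d := m.unpair.2 with hdd
    -- build the integer with code c
    set z : ℤ := if c % 2 = 1 then Int.negSucc (c / 2) else Int.ofNat (c / 2) with hz
    have hzc : Encodable.encode z = c := by
      by_cases hpar : c % 2 = 1
      · rw [hz, if_pos hpar, encode_int_negSucc]; omega
      · rw [hz, if_neg hpar, encode_int_ofNat]; omega
    have habs : z.natAbs = absOfCode c := by
      by_cases hpar : c % 2 = 1
      · rw [hz, if_pos hpar]
        have : (Int.negSucc (c/2)).natAbs = c/2 + 1 := rfl
        rw [this, absOfCode]; omega
      · rw [hz, if_neg hpar]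
        have : (Int.ofNat (c/2)).natAbs = c/2 := rfl
        rw [this, absOfCode]; omega
    refine ⟨⟨z, d, by omega, by rw [Nat.Coprime, habs]; exact hg⟩, ?_⟩
    rw [enc0_eq]
    show Nat.pair (Encodable.encode z) d = m
    rw [hzc]
    exact Nat.pair_unpair m
  · rintro ⟨y, rfl⟩
    rw [enc0_eq]
    simp only [validB, decide_eq_true_eq, Nat.unpair_pair]
    refine ⟨y.pos, ?_⟩
    rw [myGcd_eq, (code_spec y.num).2.2]
    exact y.reduced

lemma primrec_validB : Primrec validB := by
  have h1 : Primrec fun m : ℕ => m.unpair.1 := Primrec.fst.comp Primrec.unpair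
  have h2 : Primrec fun m : ℕ => m.unpair.2 := Primrec.snd.comp Primrec.unpair
  have habs : Primrec absOfCode :=
    Primrec.nat_div.comp Primrec.succ (Primrec.const 2)
  have hp1 : PrimrecPred fun m : ℕ => 0 < m.unpair.2 :=
    PrimrecRel.comp Primrec.nat_lt (Primrec.const 0) h2
  have hp2 : PrimrecPred fun m : ℕ => myGcd (absOfCode m.unpair.1) m.unpair.2 = 1 :=
    PrimrecRel.comp Primrec.eq (primrec_myGcd.comp (habs.comp h1) h2) (Primrec.const 1)
  exact (hp1.and hp2).decide

/-! ### rank -/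

def rank (x : ℕ) : ℕ := Nat.rec 0 (fun m r => if validB m then r + 1 else r) x

lemma rank_succ (x : ℕ) : rank (x + 1) = if validB x then rank x + 1 else rank x := rfl

lemma rank_eq_countP (x : ℕ) : rank x = (List.range x).countP validB := by
  induction x with
  | zero => rfl
  | succ n ih =>
      rw [List.range_succ, List.countP_append, rank_succ, ih]
      by_cases h : validB n <;> simp [h, List.countP, List.countP.go]

lemma encode_eq_rank (y : ℚ) :
    @Encodable.encode ℚ (Primcodable.toEncodable) y = rank (enc0 y) := by
  have base : @Encodable.encode ℚ (Primcodable.toEncodable) y =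
      (List.range (@Encodable.encode ℚ Rat.instEncodable y)).countP
        (fun m => @decide (m ∈ Set.range (@Encodable.encode ℚ Rat.instEncodable))
          (@Encodable.decidableRangeEncode ℚ Rat.instEncodable m)) := rfl
  rw [base, rank_eq_countP]
  refine (List.countP_congr (fun m _ => ?_)).symm
  by_cases h : m ∈ Set.range enc0
  · constructor
    · intro _; simp only [decide_eq_true_eq]; exact h
    · intro _; exact (valid_iff m).2 h
  · constructor
    · intro hv; exact absurd ((valid_iff m).1 hv) h
    · intro hd; simp only [decide_eq_true_eq] at hd; exact absurd hd h

lemma rank_mono {a b : ℕ} (h : a ≤ b) : rank a ≤ rank b := by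
  induction b with
  | zero => rw [Nat.le_zero.mp h]
  | succ n ih =>
      by_cases ha : a ≤ n
      · refine le_trans (ih ha) ?_
        rw [rank_succ]
        split <;> omega
      · have : a = n + 1 := by omega
        rw [this]

lemma rank_eq_card (x : ℕ) :
    rank x = ((Finset.range x).filter (fun v => validB v = true)).card := by
  induction x with
  | zero => rfl
  | succ n ih =>
      rw [Finset.range_add_one, Finset.filter_insert, rank_succ, ih]
      by_cases h : validB n = true
      · rw [if_pos h, if_pos h, Finset.card_insert_of_notMem (fun hc => by
          simpa using (Finset.mem_filter.1 hc).1)]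
      · rw [if_neg h, if_neg h]

lemma rank_strict {a b : ℕ} (ha : validB a = true) (h : a < b) : rank a < rank b := by
  have h1 : rank (a + 1) = rank a + 1 := by rw [rank_succ, if_pos ha]
  calc rank a < rank a + 1 := Nat.lt_succ_self _
    _ = rank (a+1) := h1.symm
    _ ≤ rank b := rank_mono h

lemma valid_pair_left (k : ℕ) : validB (Nat.pair (2 * k) 1) = true := by
  simp only [validB, decide_eq_true_eq, Nat.unpair_pair]
  refine ⟨Nat.one_pos, ?_⟩
  rw [myGcd_eq]
  exact Nat.gcd_one_right _

lemma le_bound_of_valid {m : ℕ} (hm : validB m = true) : m ≤ Nat.pair (2 * rank m) 1 := by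
  by_contra hcon
  push_neg at hcon
  -- all pair (2*k) 1 for k ≤ rank m are valid, distinct, and < m
  have hsub : (Finset.range (rank m + 1)).image (fun k => Nat.pair (2 * k) 1)
      ⊆ (Finset.range m).filter (fun x => validB x = true) := by
    intro x hx
    simp only [Finset.mem_image, Finset.mem_range] at hx
    obtain ⟨k, hk, rfl⟩ := hx
    refine Finset.mem_filter.2 ⟨Finset.mem_range.2 ?_, valid_pair_left k⟩
    calc Nat.pair (2 * k) 1 ≤ Nat.pair (2 * rank m) 1 := by
          rcases Nat.lt_or_ge k (rank m) with h | h
          · exact le_of_lt (Nat.pair_lt_pair_left 1 (by omega))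
          · have : k = rank m := by omega
            rw [this]
      _ < m := hcon
  have hcard : rank m + 1 ≤ rank m := by
    have h1 : ((Finset.range (rank m + 1)).image (fun k => Nat.pair (2 * k) 1)).card
        = rank m + 1 := by
      rw [Finset.card_image_of_injective _ (fun a b hab => by
        have := congrArg (fun x => x.unpair.1) hab
        simp only [Nat.unpair_pair] at this
        omega)]
      simp
    have h2 : ((Finset.range m).filter (fun x => validB x = true)).card = rank m :=
      (rank_eq_card m).symm
    have := Finset.card_le_card hsub
    omega
  omega

lemma primrec_rank : Primrec rank := by
  have : Primrec₂ fun (m r : ℕ) => if validB m = true then r + 1 else r :=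
    Primrec.ite (Primrec.eq.comp (primrec_validB.comp Primrec.fst) (Primrec.const true))
      (Primrec.succ.comp Primrec.snd) Primrec.snd
  exact Primrec.nat_rec₁ 0 this

lemma enc0_graph (y : ℚ) (m : ℕ) :
    enc0 y = m ↔ (validB m = true ∧ rank m = @Encodable.encode ℚ (Primcodable.toEncodable) y) := by
  constructor
  · rintro rfl
    exact ⟨(valid_iff _).2 ⟨y, rfl⟩, (encode_eq_rank y).symm⟩
  · rintro ⟨hv, hr⟩
    have hv' : validB (enc0 y) = true := (valid_iff _).2 ⟨y, rfl⟩
    have hr' : rank (enc0 y) = @Encodable.encode ℚ (Primcodable.toEncodable) y :=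
      (encode_eq_rank y).symm
    rcases lt_trichotomy (enc0 y) m with h | h | h
    · exact absurd (hr'.trans hr.symm) (Nat.ne_of_lt (rank_strict hv' h))
    · exact h
    · exact absurd (hr.trans hr'.symm) (Nat.ne_of_lt (rank_strict hv h))

lemma primrec_enc0 : Primrec enc0 := by
  apply Primrec.of_graph
  · exact ⟨fun y => Nat.pair (2 * rank (enc0 y)) 1, by
      have h1 : Primrec fun y : ℚ => 2 * @Encodable.encode ℚ (Primcodable.toEncodable) y :=
        Primrec.nat_double.comp Primrec.encode
      have : Primrec fun y : ℚ => Nat.pair (2 * @Encodable.encode ℚ (Primcodable.toEncodable) y) 1 :=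
        Primrec₂.natPair.comp h1 (Primrec.const 1)
      exact this.of_eq fun y => by rw [encode_eq_rank], fun y =>
        le_bound_of_valid ((valid_iff _).2 ⟨y, rfl⟩)⟩
  · have : PrimrecRel fun (y : ℚ) (m : ℕ) =>
        validB m = true ∧ rank m = @Encodable.encode ℚ (Primcodable.toEncodable) y :=
      PrimrecPred.and
        (PrimrecRel.comp Primrec.eq (primrec_validB.comp Primrec.snd) (Primrec.const true))
        (PrimrecRel.comp Primrec.eq (primrec_rank.comp Primrec.snd)
          (Primrec.encode.comp Primrec.fst))
    exact this.of_eq fun y m => (enc0_graph y m).symm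

lemma ratTri_eq (y : ℚ) :
    ratTri y = (natOfCode (enc0 y).unpair.1, negOfCode (enc0 y).unpair.1, (enc0 y).unpair.2) := by
  rw [enc0_eq, Nat.unpair_pair]
  obtain ⟨h1, h2, _⟩ := code_spec y.num
  rw [ratTri, h1, h2]

lemma primrec_natOfCode : Primrec natOfCode :=
  Primrec.ite (PrimrecRel.comp Primrec.eq (Primrec.nat_mod.comp .id (.const 2)) (.const 1))
    (.const 0) (Primrec.nat_div.comp .id (.const 2))

lemma primrec_negOfCode : Primrec negOfCode :=
  Primrec.ite (PrimrecRel.comp Primrec.eq (Primrec.nat_mod.comp .id (.const 2)) (.const 1))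
    (Primrec.nat_div.comp .succ (.const 2)) (.const 0)

lemma primrec_ratTri : Primrec ratTri := by
  have h1 : Primrec fun y : ℚ => (enc0 y).unpair.1 :=
    Primrec.fst.comp (Primrec.unpair.comp primrec_enc0)
  have h2 : Primrec fun y : ℚ => (enc0 y).unpair.2 :=
    Primrec.snd.comp (Primrec.unpair.comp primrec_enc0)
  exact ((primrec_natOfCode.comp h1).pair
    ((primrec_negOfCode.comp h1).pair h2)).of_eq fun y => (ratTri_eq y).symm

/-! ### primrec of the triple operations -/

lemma primrec_tmul : Primrec₂ tmul := by
  have a1 : Primrec fun p : Tri × Tri => p.1.1 := Primrec.fst.comp Primrec.fst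
  have b1 : Primrec fun p : Tri × Tri => p.1.2.1 := Primrec.fst.comp (Primrec.snd.comp Primrec.fst)
  have c1 : Primrec fun p : Tri × Tri => p.1.2.2 := Primrec.snd.comp (Primrec.snd.comp Primrec.fst)
  have a2 : Primrec fun p : Tri × Tri => p.2.1 := Primrec.fst.comp Primrec.snd
  have b2 : Primrec fun p : Tri × Tri => p.2.2.1 := Primrec.fst.comp (Primrec.snd.comp Primrec.snd)
  have c2 : Primrec fun p : Tri × Tri => p.2.2.2 := Primrec.snd.comp (Primrec.snd.comp Primrec.snd)
  exact Primrec₂.mk <| Primrec.pair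
    (Primrec.nat_add.comp (Primrec.nat_mul.comp a1 a2) (Primrec.nat_mul.comp b1 b2))
    (Primrec.pair
      (Primrec.nat_add.comp (Primrec.nat_mul.comp a1 b2) (Primrec.nat_mul.comp b1 a2))
      (Primrec.nat_mul.comp c1 c2))

lemma primrec_toneSub : Primrec toneSub := by
  have a : Primrec fun t : Tri => t.1 := Primrec.fst
  have b : Primrec fun t : Tri => t.2.1 := Primrec.fst.comp Primrec.snd
  have c : Primrec fun t : Tri => t.2.2 := Primrec.snd.comp Primrec.snd
  exact Primrec.pair (Primrec.nat_add.comp c b) (Primrec.pair a c)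

lemma primrec_tnat : Primrec tnat :=
  Primrec.pair .id (Primrec.pair (.const 0) (.const 1))

/-! ### computability of tRat -/

def tchk (t : Tri) (y : ℚ) : Bool :=
  if t.2.2 = 0 then decide (y = 0)
  else decide ((ratTri y).1 * t.2.2 + t.2.1 * (ratTri y).2.2
      = (ratTri y).2.1 * t.2.2 + t.1 * (ratTri y).2.2)

lemma primrec_tchk : Primrec₂ tchk := by
  have ht : Primrec fun p : Tri × ℚ => p.1 := Primrec.fst
  have hy : Primrec fun p : Tri × ℚ => ratTri p.2 := primrec_ratTri.comp Primrec.snd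
  have a : Primrec fun p : Tri × ℚ => p.1.1 := Primrec.fst.comp ht
  have b : Primrec fun p : Tri × ℚ => p.1.2.1 := Primrec.fst.comp (Primrec.snd.comp ht)
  have c : Primrec fun p : Tri × ℚ => p.1.2.2 := Primrec.snd.comp (Primrec.snd.comp ht)
  have pa : Primrec fun p : Tri × ℚ => (ratTri p.2).1 := Primrec.fst.comp hy
  have pb : Primrec fun p : Tri × ℚ => (ratTri p.2).2.1 := Primrec.fst.comp (Primrec.snd.comp hy)
  have pd : Primrec fun p : Tri × ℚ => (ratTri p.2).2.2 := Primrec.snd.comp (Primrec.snd.comp hy)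
  exact Primrec.ite (PrimrecRel.comp Primrec.eq c (Primrec.const 0))
    (Primrec.eq.comp Primrec.snd (Primrec.const (0 : ℚ))).decide
    (Primrec.eq.comp
      (Primrec.nat_add.comp (Primrec.nat_mul.comp pa c) (Primrec.nat_mul.comp b pd))
      (Primrec.nat_add.comp (Primrec.nat_mul.comp pb c) (Primrec.nat_mul.comp a pd))).decide

lemma tchk_iff (t : Tri) (y : ℚ) : tchk t y = true ↔ y = tRat t := by
  rcases Nat.eq_zero_or_pos t.2.2 with h0 | hpos
  · simp [tchk, h0, tRat]
  · have hne : t.2.2 ≠ 0 := Nat.pos_iff_ne_zero.mp hpos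
    simp only [tchk, if_neg hne, decide_eq_true_eq, ratTri]
    have hden : ((y.den : ℚ)) ≠ 0 := Nat.cast_ne_zero.2 y.den_nz
    have hc : ((t.2.2 : ℚ)) ≠ 0 := Nat.cast_ne_zero.2 hne
    have hnum : ((y.num.toNat : ℤ)) - ((-y.num).toNat : ℤ) = y.num := by omega
    have key : (y.num * (t.2.2 : ℤ) = ((t.1 : ℤ) - (t.2.1 : ℤ)) * (y.den : ℤ))
        ↔ y = tRat t := by
      rw [tRat, eq_div_iff hc]
      constructor
      · intro h
        have hq : (y.num : ℚ) * (t.2.2 : ℚ) = (((t.1 : ℤ) - (t.2.1 : ℤ) : ℤ) : ℚ) * (y.den : ℚ) := by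
          exact_mod_cast congrArg (fun z : ℤ => (z : ℚ)) h
        rw [← Rat.num_div_den y, div_mul_eq_mul_div, div_eq_iff hden]
        push_cast at hq ⊢
        linarith [hq]
      · intro h
        have hq : (y.num : ℚ) * (t.2.2 : ℚ) = ((t.1 : ℚ) - (t.2.1 : ℚ)) * (y.den : ℚ) := by
          rw [← Rat.num_div_den y, div_mul_eq_mul_div, div_eq_iff hden] at h
          push_cast at h ⊢
          linarith [h]
        exact_mod_cast hq
    rw [← key]
    constructor
    · intro h
      have hZ : (y.num.toNat : ℤ) * t.2.2 + (t.2.1 : ℤ) * y.den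
          = ((-y.num).toNat : ℤ) * t.2.2 + (t.1 : ℤ) * y.den := by exact_mod_cast of_decide_eq_true h
      linear_combination hZ - (t.2.2 : ℤ) * hnum
    · intro h
      have hZ : (y.num.toNat : ℤ) * t.2.2 + (t.2.1 : ℤ) * y.den
          = ((-y.num).toNat : ℤ) * t.2.2 + (t.1 : ℤ) * y.den := by
        linear_combination h + (t.2.2 : ℤ) * hnum
      exact decide_eq_true (by exact_mod_cast hZ)

def searchF (t : Tri) (k : ℕ) : Option ℚ :=
  if tchk t (Denumerable.ofNat ℚ k) then some (Denumerable.ofNat ℚ k) else none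

lemma computable_searchF : Computable₂ searchF := by
  have hofNat : Computable fun p : Tri × ℕ => Denumerable.ofNat ℚ p.2 :=
    (Computable.ofNat ℚ).comp Computable.snd
  have hcond : Computable fun p : Tri × ℕ => tchk p.1 (Denumerable.ofNat ℚ p.2) :=
    (primrec_tchk.comp Primrec.fst ((Primrec.ofNat ℚ).comp Primrec.snd)).to_comp
  have hbif : Computable fun p : Tri × ℕ =>
      bif tchk p.1 (Denumerable.ofNat ℚ p.2) then some (Denumerable.ofNat ℚ p.2) else none :=
    Computable.cond hcond (Computable.option_some.comp hofNat) (Computable.const none)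
  exact Computable₂.mk (hbif.of_eq fun p => by
    rw [searchF]
    cases tchk p.1 (Denumerable.ofNat ℚ p.2) <;> simp)

lemma searchF_encode (t : Tri) : ∃ k, searchF t k = some (tRat t) := by
  obtain ⟨k, hk⟩ : ∃ k, Denumerable.ofNat ℚ k = tRat t := ⟨_, Denumerable.ofNat_encode _⟩
  exact ⟨k, by rw [searchF, hk, if_pos ((tchk_iff t (tRat t)).2 rfl)]⟩

lemma searchF_sound {t : Tri} {n : ℕ} {a : ℚ} (h : a ∈ searchF t n) : a = tRat t := by
  rw [searchF] at h
  by_cases hchk : tchk t (Denumerable.ofNat ℚ n) = true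
  · rw [if_pos hchk] at h
    have h2 := (tchk_iff t _).1 hchk
    simp only [Option.mem_def, Option.some.injEq] at h
    rw [← h]
    exact h2
  · rw [if_neg hchk] at h
    simp at h

lemma computable_tRat : Computable tRat := by
  have hmem : ∀ t, tRat t ∈ Nat.rfindOpt (searchF t) := by
    intro t
    have hdom : (Nat.rfindOpt (searchF t)).Dom := by
      rw [Nat.rfindOpt_dom]
      obtain ⟨k, hk⟩ := searchF_encode t
      exact ⟨k, tRat t, by rw [hk]; rfl⟩
    have hget := Part.get_mem hdom
    obtain ⟨n, hn⟩ := Nat.rfindOpt_spec hget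
    have heq : (Nat.rfindOpt (searchF t)).get hdom = tRat t := searchF_sound hn
    rw [← heq]
    exact hget
  exact Partrec.of_eq_tot (Partrec.rfindOpt computable_searchF) hmem

/-! ### lists and families -/

section Lists

variable {X : Type} [Primcodable X]

def takeF (x0 : X) : List X × ℕ → List X := fun p =>
  (List.range (min p.2 p.1.length)).map (fun i => p.1.getD i x0)

lemma takeF_eq (x0 : X) (p : List X × ℕ) : takeF x0 p = p.1.take p.2 := by
  apply List.ext_getElem
  · simp [takeF, List.length_take]
  · intro i h1 h2
    simp only [takeF, List.getElem_map, List.getElem_range]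
    simp only [takeF, List.length_map, List.length_range, lt_min_iff] at h1
    rw [List.getElem_take, List.getD_eq_getElem _ _ h1.2]

lemma primrec_takeF (x0 : X) : Primrec (takeF x0) := by
  apply Primrec.list_map
  · exact Primrec.list_range.comp
      (Primrec.nat_min.comp Primrec.snd (Primrec.list_length.comp Primrec.fst))
  · exact (Primrec.list_getD x0).comp (Primrec.fst.comp Primrec.fst) Primrec.snd

noncomputable def famApp [Fintype X] (r : X → List X × ℕ → ℚ) : X × (List X × ℕ) → ℚ := fun p =>
  (List.ofFn (fun i : Fin (Fintype.card X) => r ((Fintype.equivFin X).symm i) p.2)).getD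
    ((Fintype.equivFin X) p.1) 0

lemma famApp_eq [Fintype X] (r : X → List X × ℕ → ℚ) (p : X × (List X × ℕ)) :
    famApp r p = r p.1 p.2 := by
  have hlt : (((Fintype.equivFin X) p.1) : ℕ) <
      (List.ofFn (fun i : Fin (Fintype.card X) => r ((Fintype.equivFin X).symm i) p.2)).length := by
    simp
  rw [famApp, List.getD_eq_getElem _ _ hlt, List.getElem_ofFn]
  simp

lemma computable_famApp [Fintype X] (r : X → List X × ℕ → ℚ) (hr : ∀ x, Computable (r x)) :
    Computable (famApp r) := by
  have h1 : Computable fun p : X × (List X × ℕ) =>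
      List.ofFn (fun i : Fin (Fintype.card X) => r ((Fintype.equivFin X).symm i) p.2) :=
    Computable.list_ofFn (fun i => (hr _).comp Computable.snd)
  have h2 : Computable fun p : X × (List X × ℕ) => (((Fintype.equivFin X) p.1) : ℕ) :=
    ((Primrec.dom_finite (fun x : X => (((Fintype.equivFin X) x) : ℕ))).comp Primrec.fst).to_comp
  have h3 := Computable₂.comp ((Primrec.list_getD (0:ℚ)).to_comp) h1 h2
  exact h3.of_eq fun p => rfl

/-! ### the main recursion -/

variable (S : List X → ℕ) (q : ℕ → ℚ) (R : X × (List X × ℕ) → ℚ) (x0 : X) (C : ℕ)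

def runStep : (List X × ℕ) → ℕ × Tri → Tri := fun p kt =>
  tmul kt.2 (toneSub (tmul (tnat (S (takeF x0 (p.1, kt.1))))
    (tmul (ratTri (q p.2)) (ratTri (R (p.1.getD kt.1 x0, (takeF x0 (p.1, kt.1), p.2)))))))

def mIdx : List X × ℕ → ℕ := fun p => p.2 + (C + 1) * (p.1.length + 1)

def runTri : List X × ℕ → Tri := fun p =>
  Nat.rec (motive := fun _ => Tri) (1, 0, 1)
    (fun k t => runStep S q R x0 (p.1, mIdx C p) (k, t)) p.1.length

def runRat : List X × ℕ → ℚ := fun p => tRat (runTri S q R x0 C p)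

lemma primrec_mIdx : Primrec (mIdx (X := X) C) :=
  Primrec.nat_add.comp Primrec.snd
    (Primrec.nat_mul.comp (Primrec.const (C + 1))
      (Primrec.succ.comp (Primrec.list_length.comp Primrec.fst)))

lemma computable_runRat (hS : Computable S) (hq : Computable q) (hR : Computable R) :
    Computable (runRat S q R x0 C) := by
  have htake : Primrec fun a : (List X × ℕ) × (ℕ × Tri) => takeF x0 (a.1.1, a.2.1) :=
    (primrec_takeF x0).comp (Primrec.pair (Primrec.fst.comp Primrec.fst)
      (Primrec.fst.comp Primrec.snd))
  have hm : Primrec fun a : (List X × ℕ) × (ℕ × Tri) => mIdx C a.1 :=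
    (primrec_mIdx C).comp Primrec.fst
  have hSnat : Computable fun a : (List X × ℕ) × (ℕ × Tri) => tnat (S (takeF x0 (a.1.1, a.2.1))) :=
    primrec_tnat.to_comp.comp (hS.comp htake.to_comp)
  have hqv : Computable fun a : (List X × ℕ) × (ℕ × Tri) => ratTri (q (mIdx C a.1)) :=
    primrec_ratTri.to_comp.comp (hq.comp hm.to_comp)
  have hgetD : Primrec fun a : (List X × ℕ) × (ℕ × Tri) => a.1.1.getD a.2.1 x0 :=
    (Primrec.list_getD x0).comp (Primrec.fst.comp Primrec.fst) (Primrec.fst.comp Primrec.snd)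
  have hRv : Computable fun a : (List X × ℕ) × (ℕ × Tri) =>
      ratTri (R (a.1.1.getD a.2.1 x0, (takeF x0 (a.1.1, a.2.1), mIdx C a.1))) :=
    primrec_ratTri.to_comp.comp (hR.comp
      ((hgetD.pair (htake.pair hm)).to_comp))
  have hstep : Computable₂ fun (p : List X × ℕ) (kt : ℕ × Tri) =>
      runStep S q R x0 (p.1, mIdx C p) kt := by
    apply Computable₂.mk
    have ht2 : Computable fun a : (List X × ℕ) × (ℕ × Tri) => a.2.2 :=
      Computable.snd.comp Computable.snd
    exact primrec_tmul.to_comp.comp ht2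
      (primrec_toneSub.to_comp.comp
        (primrec_tmul.to_comp.comp hSnat (primrec_tmul.to_comp.comp hqv hRv)))
  have hrec : Computable fun p : List X × ℕ =>
      Nat.rec (motive := fun _ => Tri) (1, 0, 1)
        (fun k t => runStep S q R x0 (p.1, mIdx C p) (k, t)) p.1.length :=
    Computable.nat_rec (Primrec.list_length.comp Primrec.fst).to_comp
      (Computable.const (1, 0, 1)) hstep
  exact computable_tRat.comp hrec

lemma runTri_spec (s : List X) (n : ℕ) :
    tval (runTri S q R x0 C (s, n)) =
      (∏ k ∈ Finset.range s.length, (1 - (S (s.take k) : ℝ) * ((q (mIdx C (s, n)) : ℝ) *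
        (R (s.getD k x0, (s.take k, mIdx C (s, n))) : ℝ)))) := by
  suffices h : ∀ j : ℕ,
      tval (Nat.rec (motive := fun _ => Tri) (1, 0, 1)
        (fun k t => runStep S q R x0 (s, mIdx C (s, n)) (k, t)) j) =
        (∏ k ∈ Finset.range j, (1 - (S (s.take k) : ℝ) * ((q (mIdx C (s, n)) : ℝ) *
          (R (s.getD k x0, (s.take k, mIdx C (s, n))) : ℝ)))) by
    exact h s.length
  intro j
  induction j with
  | zero => simp [tval]
  | succ j ih =>
      rw [Finset.prod_range_succ, ← ih]
      show tval (runStep S q R x0 (s, mIdx C (s, n)) (j, _)) = _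
      rw [runStep]
      have hden : (tmul (tnat (S (takeF x0 (s, j))))
          (tmul (ratTri (q (mIdx C (s, n))))
            (ratTri (R (s.getD j x0, (takeF x0 (s, j), mIdx C (s, n))))))).2.2 ≠ 0 := by
        simp only [tmul, tnat, ratTri]
        simp [Rat.den_nz]
      rw [tval_tmul, tval_toneSub _ hden, tval_tmul, tval_tmul, tval_tnat,
        tval_ratTri, tval_ratTri, takeF_eq]

end Lists

end Stmt17Aux

open Stmt17Aux

set_option maxHeartbeats 2000000

/-- Let `B > 0`, `0 < ξ < 1/B`, `S` a selection process, and `M`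
a submartingale for `Φ` with `|ΔM| ≤ B`.  Then the process
`F_M(x_{1:n}) = Π_{k<n} (1 − ξ·S(x_{1:k})·ΔM(x_{1:k})(x_{k+1}))` is a positive
supermartingale for `Φ` with `F_M(□) = 1`; if moreover `ξ = ε/(2B²)` with
`0 < ε < B`, then `⟨M⟩_S(x_{1:n}) ≤ −ε` implies
`F_M(x_{1:n}) ≥ exp((ε²/(4B²))·Σ_{k<n} S(x_{1:k}))`; and if `ξ`, `S` and `ΔM`
are computable, then `F_M` is computable. -/
theorem stmt_17 {X : Type} [Fintype X] [Nonempty X] [Primcodable X]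
    (Φ : List X → (X → ℝ) → ℝ) (hΦ : ∀ s, IsCoherent (Φ s))
    (B ξ : ℝ) (hB : 0 < B) (hξ0 : 0 < ξ) (hξB : ξ < 1 / B)
    (S : List X → ℕ) (hS01 : ∀ s, S s = 0 ∨ S s = 1)
    (M : List X → ℝ)
    (hsub : ∀ s : List X, 0 ≤ Φ s (procDiff M s))
    (hbound : ∀ (s : List X) (x : X), |M (s ++ [x]) - M s| ≤ B)
    (F : List X → ℝ) (hF1 : F [] = 1)
    (hFrec : ∀ (s : List X) (x : X),
      F (s ++ [x]) = F s * (1 - ξ * (S s : ℝ) * (M (s ++ [x]) - M s))) :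
    ((∀ s, 0 < F s) ∧ F [] = 1 ∧ IsSupermartingale Φ F) ∧
    (∀ ε : ℝ, 0 < ε → ε < B → ξ = ε / (2 * B ^ 2) →
      ∀ s : List X,
        (if 0 < ∑ k ∈ Finset.range s.length, (S (s.take k) : ℝ) then
            (∑ k ∈ Finset.range s.length,
              (S (s.take k) : ℝ) * (M (s.take (k + 1)) - M (s.take k))) /
            (∑ k ∈ Finset.range s.length, (S (s.take k) : ℝ))
          else 0) ≤ -ε →
        Real.exp ((ε ^ 2 / (4 * B ^ 2)) *
          ∑ k ∈ Finset.range s.length, (S (s.take k) : ℝ)) ≤ F s) ∧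
    (ComputableReal ξ → Computable S →
      (∀ x : X, ComputableProcess (fun s => M (s ++ [x]) - M s)) →
      ComputableProcess F) := by
  classical
  obtain ⟨x0⟩ := (inferInstance : Nonempty X)
  have hξB1 : ξ * B < 1 := by
    have := mul_lt_mul_of_pos_right hξB hB
    rwa [one_div, inv_mul_cancel₀ (ne_of_gt hB)] at this
  -- prefix extension
  have htake1 : ∀ (u : List X) (k : ℕ), k < u.length →
      u.take (k + 1) = u.take k ++ [u.getD k x0] := by
    intro u k hk
    rw [List.take_succ, List.getElem?_eq_getElem hk, List.getD_eq_getElem u x0 hk]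
    simp
  -- the product formula
  have prodF : ∀ s : List X, F s = ∏ k ∈ Finset.range s.length,
      (1 - ξ * (S (s.take k) : ℝ) * (M (s.take (k + 1)) - M (s.take k))) := by
    intro s
    induction s using List.reverseRecOn with
    | nil => simpa using hF1
    | append_singleton l a ih =>
        rw [hFrec, ih]
        have hlen : (l ++ [a]).length = l.length + 1 := by simp
        rw [hlen, Finset.prod_range_succ]
        have ht1 : (l ++ [a]).take l.length = l := by
          rw [List.take_append_of_le_length le_rfl, List.take_length]
        have ht2 : (l ++ [a]).take (l.length + 1) = l ++ [a] :=
          List.take_of_length_le (by simp)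
        congr 1
        · apply Finset.prod_congr rfl
          intro k hk
          have hk' : k < l.length := Finset.mem_range.1 hk
          rw [List.take_append_of_le_length (by omega),
            List.take_append_of_le_length (by omega)]
        · rw [ht1, ht2]
  -- positivity of each factor
  have hfacpos : ∀ (u : List X) (v : ℝ), |v| ≤ B → 0 < 1 - ξ * (S u : ℝ) * v := by
    intro u v hv
    obtain ⟨hv1, hv2⟩ := abs_le.1 hv
    rcases hS01 u with h | h <;> rw [h]
    · norm_num
    · push_cast
      have h1 : ξ * v ≤ ξ * B := mul_le_mul_of_nonneg_left hv2 hξ0.le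
      nlinarith
  have hFpos : ∀ s, 0 < F s := by
    intro s
    rw [prodF]
    apply Finset.prod_pos
    intro k hk
    have hk' : k < s.length := Finset.mem_range.1 hk
    rw [htake1 s k hk']
    exact hfacpos _ _ (hbound _ _)
  refine ⟨⟨hFpos, hF1, ?_⟩, ?_, ?_⟩
  · -- supermartingale
    intro s
    obtain ⟨hco1, hco2, hco3⟩ := hΦ s
    show -Φ s (fun x => -(procDiff F s x)) ≤ 0
    set α : ℝ := F s * (ξ * (S s : ℝ)) with hα
    have hα0 : 0 ≤ α :=
      mul_nonneg (hFpos s).le (mul_nonneg hξ0.le (Nat.cast_nonneg _))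
    have heq : (fun x : X => -(procDiff F s x)) = fun x => α * procDiff M s x := by
      funext x
      show -(F (s ++ [x]) - F s) = α * (M (s ++ [x]) - M s)
      rw [hFrec, hα]
      ring
    rw [heq, hco2 (procDiff M s) α hα0]
    have := mul_nonneg hα0 (hsub s)
    linarith
  · -- part 2
    intro ε hε0 hεB hξε s hyp
    set L := s.length with hL
    set T : ℝ := ∑ k ∈ Finset.range L, (S (s.take k) : ℝ) with hT
    set a : ℕ → ℝ := fun k => (S (s.take k) : ℝ) * (M (s.take (k + 1)) - M (s.take k)) with ha
    have hT0 : 0 ≤ T := Finset.sum_nonneg fun k _ => Nat.cast_nonneg _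
    by_cases hTpos : 0 < T
    swap
    · rw [if_neg hTpos] at hyp
      linarith
    rw [if_pos hTpos] at hyp
    have hA : ∑ k ∈ Finset.range L, a k ≤ -ε * T := by
      rw [div_le_iff₀ hTpos] at hyp
      linarith
    have hak : ∀ k, k < L → |a k| ≤ B ∧ a k ^ 2 ≤ B ^ 2 * (S (s.take k) : ℝ) := by
      intro k hk
      have hd : |M (s.take (k + 1)) - M (s.take k)| ≤ B := by
        rw [htake1 s k hk]
        exact hbound _ _
      obtain ⟨hd1, hd2⟩ := abs_le.1 hd
      rcases hS01 (s.take k) with h | h <;> rw [ha] <;> simp only [h] <;> push_cast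
      · constructor
        · simp [hB.le]
        · simp
      · constructor
        · simpa using hd
        · nlinarith
    have hξB2 : ξ * B ≤ 1 / 2 := by
      rw [hξε]
      rw [div_mul_eq_mul_div, div_le_div_iff₀ (by positivity) (by norm_num)]
      nlinarith
    have hfactor : ∀ k ∈ Finset.range L,
        Real.exp (-(ξ * a k) - (ξ * a k) ^ 2) ≤ 1 - ξ * a k := by
      intro k hk
      have hk' := Finset.mem_range.1 hk
      apply exp_factor_le
      have h1 : |ξ * a k| = ξ * |a k| := by
        rw [abs_mul, abs_of_nonneg hξ0.le]
      rw [h1]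
      calc ξ * |a k| ≤ ξ * B := mul_le_mul_of_nonneg_left (hak k hk').1 hξ0.le
        _ ≤ 1 / 2 := hξB2
    have hFeq : F s = ∏ k ∈ Finset.range L, (1 - ξ * a k) := by
      rw [prodF]
      apply Finset.prod_congr rfl
      intro k _
      rw [ha]
      ring_nf
    have hstep1 : Real.exp (∑ k ∈ Finset.range L, (-(ξ * a k) - (ξ * a k) ^ 2)) ≤ F s := by
      rw [hFeq, Real.exp_sum]
      exact Finset.prod_le_prod (fun k _ => (Real.exp_pos _).le) hfactor
    have hsum2 : ∑ k ∈ Finset.range L, a k ^ 2 ≤ B ^ 2 * T := by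
      rw [hT, Finset.mul_sum]
      exact Finset.sum_le_sum fun k hk => (hak k (Finset.mem_range.1 hk)).2
    have hsumeq : ∑ k ∈ Finset.range L, (-(ξ * a k) - (ξ * a k) ^ 2)
        = -ξ * (∑ k ∈ Finset.range L, a k) - ξ ^ 2 * (∑ k ∈ Finset.range L, a k ^ 2) := by
      rw [Finset.mul_sum, Finset.mul_sum, ← Finset.sum_sub_distrib]
      apply Finset.sum_congr rfl
      intro k _
      ring
    have hcoef : ξ * ε - ξ ^ 2 * B ^ 2 = ε ^ 2 / (4 * B ^ 2) := by
      rw [hξε]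
      field_simp
      ring
    have hexp : ε ^ 2 / (4 * B ^ 2) * T ≤ ∑ k ∈ Finset.range L, (-(ξ * a k) - (ξ * a k) ^ 2) := by
      rw [hsumeq]
      have h1 : -ξ * (∑ k ∈ Finset.range L, a k) ≥ ξ * ε * T := by nlinarith
      have h2 : ξ ^ 2 * (∑ k ∈ Finset.range L, a k ^ 2) ≤ ξ ^ 2 * (B ^ 2 * T) := by nlinarith
      nlinarith
    calc Real.exp (ε ^ 2 / (4 * B ^ 2) * T)
        ≤ Real.exp (∑ k ∈ Finset.range L, (-(ξ * a k) - (ξ * a k) ^ 2)) :=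
          Real.exp_le_exp.2 hexp
      _ ≤ F s := hstep1
  · -- part 3: computability
    rintro ⟨q, hqc, hq⟩ hScomp hMcomp
    choose r hrc hr using hMcomp
    set R : X × (List X × ℕ) → ℚ := famApp r with hR
    have hRc : Computable R := computable_famApp r hrc
    have hRval : ∀ (x : X) (u : List X) (m : ℕ),
        |(R (x, (u, m)) : ℝ) - (M (u ++ [x]) - M u)| ≤ (2 : ℝ) ^ (-(m : ℤ)) := by
      intro x u m
      rw [hR, famApp_eq]
      exact hr x u m m le_rfl
    obtain ⟨c0, hc0⟩ := exists_nat_gt (B + 1 + ξ)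
    set C := c0 + 2 with hCdef
    have h2C : (1 : ℝ) ≤ 2 ^ C := one_le_two_pow
    have hC3 : (3 : ℝ) ≤ 2 ^ C := by
      calc (3:ℝ) ≤ 4 := by norm_num
        _ = 2 ^ 2 := by norm_num
        _ ≤ 2 ^ C := by
            apply pow_le_pow_right₀ one_le_two
            omega
    have hCB : B + 1 + ξ ≤ 2 ^ C := by
      have h1 : (c0 : ℝ) ≤ 2 ^ c0 := by
        exact_mod_cast (Nat.lt_two_pow_self (n := c0)).le
      have h2 : (2:ℝ) ^ c0 ≤ 2 ^ C := by
        apply pow_le_pow_right₀ one_le_two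
        omega
      linarith
    refine ⟨runRat S q R x0 C, computable_runRat S q R x0 C hScomp hqc hRc, ?_⟩
    intro s n N hNn
    set L := s.length with hL
    set m := mIdx C (s, n) with hm
    have hmval : m = n + (C + 1) * (L + 1) := rfl
    have twoZ : ∀ j : ℕ, (2 : ℝ) ^ (-(j : ℤ)) = ((2 : ℝ) ^ j)⁻¹ := by
      intro j
      rw [zpow_neg, zpow_natCast]
    have hm1 : (2 : ℝ) ^ (-(m : ℤ)) ≤ 1 := by
      rw [twoZ]
      exact inv_le_one_of_one_le₀ one_le_two_pow
    set g : ℕ → ℝ := fun k => 1 - (S (s.take k) : ℝ) * ((q m : ℝ) *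
      (R (s.getD k x0, (s.take k, m)) : ℝ)) with hg
    set f : ℕ → ℝ := fun k => 1 - ξ * (S (s.take k) : ℝ) *
      (M (s.take (k + 1)) - M (s.take k)) with hf
    have hrunval : ((runRat S q R x0 C (s, n) : ℚ) : ℝ) = ∏ k ∈ Finset.range L, g k := by
      rw [runRat, tRat_cast, runTri_spec]
    have hSk1 : ∀ k, (S (s.take k) : ℝ) ≤ 1 := by
      intro k
      rcases hS01 (s.take k) with h | h <;> rw [h] <;> norm_num
    have hSk0 : ∀ k, 0 ≤ (S (s.take k) : ℝ) := fun k => Nat.cast_nonneg _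
    have hfg : ∀ k < L, |f k - g k| ≤ 2 ^ C * (2 : ℝ) ^ (-(m : ℤ)) := by
      intro k hk
      set d := M (s.take (k + 1)) - M (s.take k) with hd
      set rv := (R (s.getD k x0, (s.take k, m)) : ℝ) with hrv
      have hdB : |d| ≤ B := by
        rw [hd, htake1 s k hk]
        exact hbound _ _
      have hrd : |rv - d| ≤ (2 : ℝ) ^ (-(m : ℤ)) := by
        rw [hrv, hd, htake1 s k hk]
        exact hRval _ _ _
      have hqm : |(q m : ℝ) - ξ| ≤ (2 : ℝ) ^ (-(m : ℤ)) := hq m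
      have hrabs : |rv| ≤ B + 1 := by
        calc |rv| = |d + (rv - d)| := by ring_nf
          _ ≤ |d| + |rv - d| := abs_add_le _ _
          _ ≤ B + 1 := by linarith
      have hdiff : |(q m : ℝ) * rv - ξ * d| ≤ (2 : ℝ) ^ (-(m : ℤ)) * (B + 1 + ξ) := by
        have e1 : (q m : ℝ) * rv - ξ * d = ((q m : ℝ) - ξ) * rv + ξ * (rv - d) := by ring
        rw [e1]
        calc |((q m : ℝ) - ξ) * rv + ξ * (rv - d)|
            ≤ |((q m : ℝ) - ξ) * rv| + |ξ * (rv - d)| := abs_add_le _ _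
          _ = |(q m : ℝ) - ξ| * |rv| + ξ * |rv - d| := by
              rw [abs_mul, abs_mul, abs_of_nonneg hξ0.le]
          _ ≤ (2 : ℝ) ^ (-(m : ℤ)) * (B + 1) + ξ * (2 : ℝ) ^ (-(m : ℤ)) := by
              have t1 : |(q m : ℝ) - ξ| * |rv| ≤ (2 : ℝ) ^ (-(m : ℤ)) * (B + 1) :=
                mul_le_mul hqm hrabs (abs_nonneg _) (by positivity)
              have t2 : ξ * |rv - d| ≤ ξ * (2 : ℝ) ^ (-(m : ℤ)) :=
                mul_le_mul_of_nonneg_left hrd hξ0.le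
              linarith
          _ = (2 : ℝ) ^ (-(m : ℤ)) * (B + 1 + ξ) := by ring
      have e2 : f k - g k = (S (s.take k) : ℝ) * ((q m : ℝ) * rv - ξ * d) := by
        rw [hf, hg, hrv, hd]
        ring
      rw [e2, abs_mul, abs_of_nonneg (hSk0 k)]
      calc (S (s.take k) : ℝ) * |(q m : ℝ) * rv - ξ * d|
          ≤ 1 * ((2 : ℝ) ^ (-(m : ℤ)) * (B + 1 + ξ)) := by
            apply mul_le_mul (hSk1 k) hdiff (abs_nonneg _) (by norm_num)
        _ ≤ 2 ^ C * (2 : ℝ) ^ (-(m : ℤ)) := by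
            rw [one_mul, mul_comm]
            apply mul_le_mul_of_nonneg_right hCB (by positivity)
    have hfA2 : ∀ k < L, |f k| ≤ 2 := by
      intro k hk
      have hdB : |M (s.take (k + 1)) - M (s.take k)| ≤ B := by
        rw [htake1 s k hk]
        exact hbound _ _
      have habs : |ξ * (S (s.take k) : ℝ) * (M (s.take (k + 1)) - M (s.take k))| ≤ 1 := by
        rw [abs_mul, abs_mul, abs_of_nonneg hξ0.le, abs_of_nonneg (hSk0 k)]
        have t1 : ξ * (S (s.take k) : ℝ) ≤ ξ * 1 := mul_le_mul_of_nonneg_left (hSk1 k) hξ0.le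
        have t2 : ξ * (S (s.take k) : ℝ) * |M (s.take (k + 1)) - M (s.take k)| ≤ ξ * B := by
          have := mul_le_mul (by linarith [t1] : ξ * (S (s.take k) : ℝ) ≤ ξ) hdB
            (abs_nonneg _) hξ0.le
          linarith
        linarith
      obtain ⟨hx1, hx2⟩ := abs_le.1 habs
      show |1 - ξ * (S (s.take k) : ℝ) * (M (s.take (k + 1)) - M (s.take k))| ≤ 2
      exact abs_le.2 ⟨by linarith, by linarith⟩
    have hfA : ∀ k < L, |f k| ≤ 2 ^ C := fun k hk => (hfA2 k hk).trans (by linarith [hC3])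
    have hCm : (2:ℝ) ^ C * (2:ℝ) ^ (-(m : ℤ)) ≤ 1 := by
      rw [twoZ]
      have hCle : C ≤ m := by
        rw [hmval]
        calc C ≤ (C + 1) * (L + 1) := by nlinarith
          _ ≤ n + (C + 1) * (L + 1) := Nat.le_add_left _ _
      have h1 : (2:ℝ) ^ C ≤ 2 ^ m := pow_le_pow_right₀ one_le_two hCle
      rw [show (2:ℝ) ^ C * ((2:ℝ) ^ m)⁻¹ = 2 ^ C / 2 ^ m from by ring]
      exact (div_le_one (by positivity)).2 h1
    have hgA : ∀ k < L, |g k| ≤ 2 ^ C := by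
      intro k hk
      have h1 := hfg k hk
      have h2 := hfA2 k hk
      have h3 : |g k| ≤ |f k| + |f k - g k| := by
        calc |g k| = |f k - (f k - g k)| := by congr 1; ring
          _ ≤ |f k| + |f k - g k| := abs_sub_le' _ _
      linarith [hC3, hCm]
    have hδ0 : (0:ℝ) ≤ 2 ^ C * (2:ℝ) ^ (-(m : ℤ)) := by positivity
    have master := abs_prod_sub_prod_le (L := L) (f := f) (g := g) (A := (2:ℝ) ^ C)
      (δ := 2 ^ C * (2:ℝ) ^ (-(m : ℤ))) one_le_two_pow hδ0 hfA hgA hfg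
    have hFs : F s = ∏ k ∈ Finset.range L, f k := by
      simp only [hf]
      exact prodF s
    have goal1 : |(runRat S q R x0 C (s, n) : ℝ) - F s| ≤
        (L : ℝ) * ((2:ℝ) ^ C) ^ L * (2 ^ C * (2:ℝ) ^ (-(m : ℤ))) := by
      rw [hrunval, hFs, abs_sub_comm]
      exact master
    have hnat : L * 2 ^ (C * L) * 2 ^ C * 2 ^ n ≤ 2 ^ m := by
      rw [hmval]
      calc L * 2 ^ (C * L) * 2 ^ C * 2 ^ n
          ≤ 2 ^ L * 2 ^ (C * L) * 2 ^ C * 2 ^ n := by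
            have := (Nat.lt_two_pow_self (n := L)).le
            exact Nat.mul_le_mul_right _ (Nat.mul_le_mul_right _ (Nat.mul_le_mul_right _ this))
        _ = 2 ^ (L + C * L + C + n) := by rw [← pow_add, ← pow_add, ← pow_add]
        _ ≤ 2 ^ (n + (C + 1) * (L + 1)) := by
            apply Nat.pow_le_pow_right (by norm_num)
            have : (C + 1) * (L + 1) = C * L + C + L + 1 := by ring
            omega
    have hreal : (L : ℝ) * ((2:ℝ) ^ C) ^ L * (2 ^ C * (2:ℝ) ^ (-(m : ℤ)))
        ≤ (2:ℝ) ^ (-(n : ℤ)) := by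
      rw [twoZ, twoZ, ← pow_mul]
      have hcast : (L : ℝ) * 2 ^ (C * L) * 2 ^ C * 2 ^ n ≤ 2 ^ m := by exact_mod_cast hnat
      have h2m : (0:ℝ) < 2 ^ m := by positivity
      have h2n : (0:ℝ) < 2 ^ n := by positivity
      rw [show (L : ℝ) * 2 ^ (C * L) * (2 ^ C * ((2:ℝ) ^ m)⁻¹)
          = ((L : ℝ) * 2 ^ (C * L) * 2 ^ C) / 2 ^ m from by ring,
        show ((2:ℝ) ^ n)⁻¹ = 1 / 2 ^ n from by rw [one_div]]
      rw [div_le_div_iff₀ h2m h2n]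
      nlinarith [hcast]
    have hNle : (2:ℝ) ^ (-(n : ℤ)) ≤ (2:ℝ) ^ (-(N : ℤ)) := by
      rw [twoZ, twoZ]
      have h1 : (2:ℝ) ^ N ≤ 2 ^ n := pow_le_pow_right₀ one_le_two hNn
      have h2 : (0:ℝ) < 2 ^ N := by positivity
      exact inv_anti₀ h2 h1
    calc |(runRat S q R x0 C (s, n) : ℝ) - F s|
        ≤ (L : ℝ) * ((2:ℝ) ^ C) ^ L * (2 ^ C * (2:ℝ) ^ (-(m : ℤ))) := goal1
      _ ≤ (2:ℝ) ^ (-(n : ℤ)) := hreal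
      _ ≤ (2:ℝ) ^ (-(N : ℤ)) := hNle
end

section
/- Let f be a gamble on X and let γ ∈ ℝ satisfy min f ≤ γ ≤ max f. Define E_{γ,f}(g) := sup{ min_{x∈X}( g(x) − μ·(f(x) − γ) ) : μ ≥ 0 } for all gambles g. Then E_{γ,f} is a coherent lower expectation with E_{γ,f}(f) = γ and conjugate upper expectation value Ē_{γ,f}(f) = max f. Moreover, for every coherent lower expectation E' with γ ≤ E'(f), it holds that E_{γ,f}(g) ≤ E'(g) for all gambles g. -/
open Filter

/-- The coherent lower expectation `E_{γ,f}`, defined by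
`E_{γ,f}(g) = sup{ min_x (g(x) − μ(f(x) − γ)) : μ ≥ 0 }`. -/
noncomputable def lowerGamma {X : Type} [Fintype X] [Nonempty X]
    (f : X → ℝ) (γ : ℝ) (g : X → ℝ) : ℝ :=
  sSup {c : ℝ | ∃ μ : ℝ, 0 ≤ μ ∧
    c = Finset.univ.inf' Finset.univ_nonempty (fun x => g x - μ * (f x - γ))}


set_option linter.unusedSectionVars false

section Aux
variable {X : Type} [Fintype X] [Nonempty X]

noncomputable def infU (h : X → ℝ) : ℝ := Finset.univ.inf' Finset.univ_nonempty h

lemma infU_le (h : X → ℝ) (x : X) : infU h ≤ h x := Finset.inf'_le _ (Finset.mem_univ x)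

lemma le_infU {c : ℝ} (h : X → ℝ) (hc : ∀ x, c ≤ h x) : c ≤ infU h :=
  Finset.le_inf' _ _ (fun x _ => hc x)

lemma infU_mul (α : ℝ) (hα : 0 ≤ α) (h : X → ℝ) :
    infU (fun x => α * h x) = α * infU h := by
  obtain ⟨x0, -, hx0⟩ := Finset.exists_mem_eq_inf' (Finset.univ_nonempty) h
  apply le_antisymm
  · calc infU (fun x => α * h x) ≤ α * h x0 := infU_le _ x0
      _ = α * infU h := by rw [infU, hx0]
  · exact le_infU _ fun x => mul_le_mul_of_nonneg_left (infU_le h x) hα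

lemma infU_neg (h : X → ℝ) :
    infU (fun x => -h x) = -(Finset.univ.sup' Finset.univ_nonempty h) := by
  obtain ⟨x1, -, hx1⟩ := Finset.exists_mem_eq_sup' (Finset.univ_nonempty) h
  apply le_antisymm
  · calc infU (fun x => -h x) ≤ -h x1 := infU_le _ x1
      _ = _ := by rw [hx1]
  · exact le_infU _ fun x => neg_le_neg (Finset.le_sup' _ (Finset.mem_univ x))

def Sset (f : X → ℝ) (γ : ℝ) (g : X → ℝ) : Set ℝ :=
  {c : ℝ | ∃ μ : ℝ, 0 ≤ μ ∧ c = infU (fun x => g x - μ * (f x - γ))}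

variable (f : X → ℝ) (γ : ℝ)

lemma mem_Sset (g : X → ℝ) {μ : ℝ} (hμ : 0 ≤ μ) :
    infU (fun x => g x - μ * (f x - γ)) ∈ Sset f γ g := ⟨μ, hμ, rfl⟩

lemma Sset_nonempty (g : X → ℝ) : (Sset f γ g).Nonempty :=
  ⟨_, mem_Sset f γ g le_rfl⟩

lemma infU_mem_Sset (g : X → ℝ) : infU g ∈ Sset f γ g := by
  have := mem_Sset f γ g (le_refl 0)
  simpa using this

lemma Sset_bddAbove (h2 : γ ≤ Finset.univ.sup' Finset.univ_nonempty f) (g : X → ℝ) :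
    BddAbove (Sset f γ g) := by
  obtain ⟨x1, -, hx1⟩ := Finset.exists_mem_eq_sup' (Finset.univ_nonempty) f
  have hfx1 : γ ≤ f x1 := hx1 ▸ h2
  refine ⟨g x1, fun c hc => ?_⟩
  obtain ⟨μ, hμ, rfl⟩ := hc
  calc infU (fun x => g x - μ * (f x - γ)) ≤ g x1 - μ * (f x1 - γ) := infU_le _ x1
    _ ≤ g x1 := by nlinarith

variable (h1 : Finset.univ.inf' Finset.univ_nonempty f ≤ γ)
    (h2 : γ ≤ Finset.univ.sup' Finset.univ_nonempty f)
include h2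

lemma lG_def (g : X → ℝ) : lowerGamma f γ g = sSup (Sset f γ g) := rfl

lemma lG_min (g : X → ℝ) : infU g ≤ lowerGamma f γ g :=
  le_csSup (Sset_bddAbove f γ h2 g) (infU_mem_Sset f γ g)

lemma lG_le (g : X → ℝ) {b : ℝ} (hb : ∀ c ∈ Sset f γ g, c ≤ b) : lowerGamma f γ g ≤ b :=
  csSup_le (Sset_nonempty f γ g) hb

lemma key_add (g h : X → ℝ) : ∀ c ∈ Sset f γ g, ∀ d ∈ Sset f γ h,
    c + d ≤ lowerGamma f γ (fun x => g x + h x) := by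
  rintro c ⟨μ, hμ, rfl⟩ d ⟨ν, hν, rfl⟩
  have step : infU (fun x => g x - μ * (f x - γ)) + infU (fun x => h x - ν * (f x - γ)) ≤
      infU (fun x => (g x + h x) - (μ + ν) * (f x - γ)) := by
    apply le_infU
    intro x
    have hg := infU_le (fun x => g x - μ * (f x - γ)) x
    have hh := infU_le (fun x => h x - ν * (f x - γ)) x
    nlinarith [hg, hh]
  exact step.trans (le_csSup (Sset_bddAbove f γ h2 _) (mem_Sset f γ _ (by linarith)))

lemma lG_superadd (g h : X → ℝ) :
    lowerGamma f γ g + lowerGamma f γ h ≤ lowerGamma f γ (fun x => g x + h x) := by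
  have hkey := key_add f γ h2 g h
  have hg : lowerGamma f γ g ≤ lowerGamma f γ (fun x => g x + h x) - lowerGamma f γ h := by
    apply lG_le f γ h2
    intro c hc
    have hB : lowerGamma f γ h ≤ lowerGamma f γ (fun x => g x + h x) - c := by
      apply lG_le f γ h2
      intro d hd
      linarith [hkey c hc d hd]
    linarith
  linarith

lemma lG_homog (g : X → ℝ) (α : ℝ) (hα : 0 ≤ α) :
    lowerGamma f γ (fun x => α * g x) = α * lowerGamma f γ g := by
  obtain ⟨x1, -, hx1⟩ := Finset.exists_mem_eq_sup' (Finset.univ_nonempty) f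
  have hfx1 : γ ≤ f x1 := hx1 ▸ h2
  rcases eq_or_lt_of_le hα with h0 | hpos
  · -- α = 0
    subst h0
    rw [zero_mul]
    apply le_antisymm
    · apply lG_le f γ h2
      rintro c ⟨μ, hμ, rfl⟩
      calc infU (fun x => 0 * g x - μ * (f x - γ)) ≤ 0 * g x1 - μ * (f x1 - γ) := infU_le _ x1
        _ ≤ 0 := by nlinarith
    · have : infU (fun x : X => 0 * g x) = 0 := by
        simp [infU]
      calc (0:ℝ) = infU (fun x : X => 0 * g x) := this.symm
        _ ≤ _ := lG_min f γ h2 _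
  · apply le_antisymm
    · apply lG_le f γ h2
      rintro c ⟨μ, hμ, rfl⟩
      have he : (fun x => α * g x - μ * (f x - γ)) =
          (fun x => α * (g x - (μ/α) * (f x - γ))) := by
        funext x; field_simp
      rw [he, infU_mul α hα]
      exact mul_le_mul_of_nonneg_left
        (le_csSup (Sset_bddAbove f γ h2 g) (mem_Sset f γ g (by positivity))) hα
    · have hd : ∀ d ∈ Sset f γ g, d ≤ lowerGamma f γ (fun x => α * g x) / α := by
        rintro d ⟨ν, hν, rfl⟩
        rw [le_div_iff₀ hpos, mul_comm]
        have he : (fun x => α * (g x - ν * (f x - γ))) =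
            (fun x => α * g x - (α * ν) * (f x - γ)) := by
          funext x; ring
        calc α * infU (fun x => g x - ν * (f x - γ))
            = infU (fun x => α * g x - (α * ν) * (f x - γ)) := by
              rw [← infU_mul α hα, he]
          _ ≤ _ := le_csSup (Sset_bddAbove f γ h2 _)
              (mem_Sset f γ _ (by positivity))
      have := lG_le f γ h2 g hd
      calc α * lowerGamma f γ g ≤ α * (lowerGamma f γ (fun x => α * g x) / α) :=
            mul_le_mul_of_nonneg_left this hα
        _ = _ := by field_simp

include h1 in
lemma lG_self : lowerGamma f γ f = γ := by
  obtain ⟨x0, -, hx0⟩ := Finset.exists_mem_eq_inf' (Finset.univ_nonempty) f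
  obtain ⟨x1, -, hx1⟩ := Finset.exists_mem_eq_sup' (Finset.univ_nonempty) f
  have hfx0 : f x0 ≤ γ := hx0 ▸ h1
  have hfx1 : γ ≤ f x1 := hx1 ▸ h2
  apply le_antisymm
  · apply lG_le f γ h2
    rintro c ⟨μ, hμ, rfl⟩
    rcases le_or_gt μ 1 with hμ1 | hμ1
    · calc infU (fun x => f x - μ * (f x - γ)) ≤ f x0 - μ * (f x0 - γ) := infU_le _ x0
        _ ≤ γ := by nlinarith
    · calc infU (fun x => f x - μ * (f x - γ)) ≤ f x1 - μ * (f x1 - γ) := infU_le _ x1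
        _ ≤ γ := by nlinarith
  · have : infU (fun x => f x - 1 * (f x - γ)) = γ := by
      simp [infU]
    calc γ = infU (fun x => f x - 1 * (f x - γ)) := this.symm
      _ ≤ _ := le_csSup (Sset_bddAbove f γ h2 f) (mem_Sset f γ f zero_le_one)

lemma lG_upper : upperE (lowerGamma f γ) f = Finset.univ.sup' Finset.univ_nonempty f := by
  obtain ⟨x1, -, hx1⟩ := Finset.exists_mem_eq_sup' (Finset.univ_nonempty) f
  have hfx1 : γ ≤ f x1 := hx1 ▸ h2
  have hM : ∀ x, f x ≤ f x1 := fun x => hx1 ▸ Finset.le_sup' f (Finset.mem_univ x)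
  have hE : lowerGamma f γ (fun x => -f x) = -f x1 := by
    apply le_antisymm
    · apply lG_le f γ h2
      rintro c ⟨μ, hμ, rfl⟩
      calc infU (fun x => -f x - μ * (f x - γ)) ≤ -f x1 - μ * (f x1 - γ) := infU_le _ x1
        _ ≤ -f x1 := by nlinarith
    · have h5 : infU (fun x => -f x) = -f x1 :=
        le_antisymm (infU_le _ x1) (le_infU _ fun x => neg_le_neg (hM x))
      calc -f x1 = infU (fun x => -f x) := h5.symm
        _ ≤ _ := lG_min f γ h2 _
  rw [upperE, hE, neg_neg, hx1]

lemma lG_dominated (E' : (X → ℝ) → ℝ)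
    (hc1 : ∀ g : X → ℝ, Finset.univ.inf' Finset.univ_nonempty g ≤ E' g)
    (hc2 : ∀ (g : X → ℝ) (α : ℝ), 0 ≤ α → E' (fun x => α * g x) = α * E' g)
    (hc3 : ∀ g h : X → ℝ, E' g + E' h ≤ E' (fun x => g x + h x))
    (hEf : γ ≤ E' f) (g : X → ℝ) : lowerGamma f γ g ≤ E' g := by
  have hE0 : E' (fun _ => (0:ℝ)) = 0 := by
    have := hc2 (fun _ => (0:ℝ)) 0 le_rfl
    simpa using this
  have hconst : ∀ c : ℝ, E' (fun _ => c) = c := by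
    intro c
    have hlow : ∀ c : ℝ, c ≤ E' (fun _ => c) := by
      intro c
      have := hc1 (fun _ => c)
      simpa [Finset.inf'_const] using this
    have hadd := hc3 (fun _ => c) (fun _ => -c)
    have : E' (fun _ => c) + E' (fun _ => -c) ≤ 0 := by
      simpa [hE0] using hadd
    have h1 := hlow c
    have h2 := hlow (-c)
    linarith
  apply lG_le f γ h2
  rintro c ⟨μ, hμ, rfl⟩
  have hfγ : 0 ≤ E' (fun x => f x - γ) := by
    have hadd := hc3 f (fun _ => -γ)
    have : E' f + -γ ≤ E' (fun x => f x - γ) := by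
      rw [hconst (-γ)] at hadd
      simpa [sub_eq_add_neg] using hadd
    linarith
  have hμf : 0 ≤ E' (fun x => μ * (f x - γ)) := by
    rw [hc2 _ μ hμ]; positivity
  have hsplit := hc3 (fun x => g x - μ * (f x - γ)) (fun x => μ * (f x - γ))
  have hsum : E' (fun x => g x - μ * (f x - γ) + μ * (f x - γ)) = E' g := by
    congr 1; funext x; ring
  rw [hsum] at hsplit
  calc infU (fun x => g x - μ * (f x - γ)) ≤ E' (fun x => g x - μ * (f x - γ)) := hc1 _
    _ ≤ E' g := by linarith

end Aux

/-- For a gamble `f` and `min f ≤ γ ≤ max f`, `E_{γ,f}` is a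
coherent lower expectation with `E_{γ,f}(f) = γ` and `Ē_{γ,f}(f) = max f`, and
it is dominated by every coherent lower expectation `E'` with `γ ≤ E'(f)`. -/
theorem stmt_18 {X : Type} [Fintype X] [Nonempty X]
    (f : X → ℝ) (γ : ℝ)
    (h1 : Finset.univ.inf' Finset.univ_nonempty f ≤ γ)
    (h2 : γ ≤ Finset.univ.sup' Finset.univ_nonempty f) :
    IsCoherent (lowerGamma f γ) ∧
    lowerGamma f γ f = γ ∧
    upperE (lowerGamma f γ) f = Finset.univ.sup' Finset.univ_nonempty f ∧
    ∀ E' : (X → ℝ) → ℝ, IsCoherent E' → γ ≤ E' f →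
      ∀ g : X → ℝ, lowerGamma f γ g ≤ E' g := by
  refine ⟨⟨fun g => lG_min f γ h2 g, fun g α hα => lG_homog f γ h2 g α hα,
    fun g h => lG_superadd f γ h2 g h⟩, lG_self f γ h1 h2, lG_upper f γ h2, ?_⟩
  rintro E' ⟨hc1, hc2, hc3⟩ hEf g
  exact lG_dominated f γ h2 E' hc1 hc2 hc3 hEf g
end

section
/- Let f be a gamble on X and let I be a nonempty closed interval with I ⊆ [min f, max f]. Define E_{I,f}(g) := max{ E_{min I, f}(g), E_{−max I, −f}(g) } for all gambles g, where for a gamble h and real γ with min h ≤ γ ≤ max h, E_{γ,h}(g) := sup{ min_{x∈X}( g(x) − μ·(h(x) − γ) ) : μ ≥ 0 }. Then E_{I,f} is a coherent lower expectation with E_{I,f}(f) = min I and conjugate upper expectation value Ē_{I,f}(f) = max I. Moreover, for every coherent lower expectation E' with min I ≤ E'(f) and Ē'(f) ≤ max I, it holds that E_{I,f}(g) ≤ E'(g) for all gambles g. -/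
open Filter

namespace Stmt19Aux

variable {X : Type} [Fintype X] [Nonempty X]

noncomputable def mInf (g : X → ℝ) : ℝ := Finset.univ.inf' Finset.univ_nonempty g
noncomputable def mSup (g : X → ℝ) : ℝ := Finset.univ.sup' Finset.univ_nonempty g

lemma mInf_le (g : X → ℝ) (x : X) : mInf g ≤ g x := Finset.inf'_le _ (Finset.mem_univ x)
lemma le_mInf {g : X → ℝ} {c : ℝ} (h : ∀ x, c ≤ g x) : c ≤ mInf g :=
  Finset.le_inf' _ _ (fun x _ => h x)
lemma le_mSup (g : X → ℝ) (x : X) : g x ≤ mSup g := Finset.le_sup' _ (Finset.mem_univ x)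

lemma exists_mInf (g : X → ℝ) : ∃ x, mInf g = g x := by
  obtain ⟨x, _, hx⟩ := Finset.exists_mem_eq_inf' (Finset.univ_nonempty) g
  exact ⟨x, hx⟩

lemma exists_mSup (g : X → ℝ) : ∃ x, mSup g = g x := by
  obtain ⟨x, _, hx⟩ := Finset.exists_mem_eq_sup' (Finset.univ_nonempty) g
  exact ⟨x, hx⟩

lemma mInf_add_const (g : X → ℝ) (c : ℝ) : mInf (fun x => g x + c) = mInf g + c := by
  obtain ⟨x, hx⟩ := exists_mInf g
  apply le_antisymm
  · calc mInf (fun x => g x + c) ≤ g x + c := mInf_le _ x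
      _ = mInf g + c := by rw [hx]
  · exact le_mInf fun y => add_le_add_left (mInf_le g y) c

lemma mInf_smul (α : ℝ) (hα : 0 ≤ α) (g : X → ℝ) :
    mInf (fun x => α * g x) = α * mInf g := by
  obtain ⟨x, hx⟩ := exists_mInf g
  apply le_antisymm
  · calc mInf (fun x => α * g x) ≤ α * g x := mInf_le _ x
      _ = α * mInf g := by rw [hx]
  · exact le_mInf fun y => mul_le_mul_of_nonneg_left (mInf_le g y) hα

/-- The unified set of lower bounds. -/
def T (f : X → ℝ) (a b : ℝ) (g : X → ℝ) : Set ℝ :=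
  {c : ℝ | ∃ μ : ℝ, c = mInf (fun x => g x - μ * f x) + min (μ * a) (μ * b)}

variable {f : X → ℝ} {a b : ℝ}

lemma mInf_mem_T (g : X → ℝ) : mInf g ∈ T f a b g := ⟨0, by simp⟩

lemma T_nonempty (g : X → ℝ) : (T f a b g).Nonempty := ⟨_, mInf_mem_T g⟩

lemma T_elem_le (hab : a ≤ b) (h1 : mInf f ≤ a) (h2 : b ≤ mSup f) (g : X → ℝ) :
    ∀ c ∈ T f a b g, c ≤ mSup g := by
  rintro c ⟨μ, rfl⟩
  rcases le_or_gt 0 μ with hμ | hμ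
  · obtain ⟨x, hx⟩ := exists_mSup f
    have hfx : a ≤ f x := by rw [← hx]; linarith
    have h3 : mInf (fun x => g x - μ * f x) ≤ g x - μ * f x := mInf_le _ x
    have h4 : min (μ * a) (μ * b) ≤ μ * a := min_le_left _ _
    have h5 : μ * a ≤ μ * f x := mul_le_mul_of_nonneg_left hfx hμ
    have h6 : g x ≤ mSup g := le_mSup g x
    linarith
  · obtain ⟨x, hx⟩ := exists_mInf f
    have hfx : f x ≤ b := by rw [← hx]; linarith
    have h3 : mInf (fun x => g x - μ * f x) ≤ g x - μ * f x := mInf_le _ x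
    have h4 : min (μ * a) (μ * b) ≤ μ * b := min_le_right _ _
    have h5 : μ * b ≤ μ * f x := by nlinarith
    have h6 : g x ≤ mSup g := le_mSup g x
    linarith

lemma T_bdd (hab : a ≤ b) (h1 : mInf f ≤ a) (h2 : b ≤ mSup f) (g : X → ℝ) :
    BddAbove (T f a b g) := ⟨mSup g, fun c hc => T_elem_le hab h1 h2 g c hc⟩

lemma elem_eq1 (hab : a ≤ b) {μ : ℝ} (hμ : 0 ≤ μ) (g : X → ℝ) :
    mInf (fun x => g x - μ * (f x - a))
      = mInf (fun x => g x - μ * f x) + min (μ * a) (μ * b) := by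
  rw [min_eq_left (mul_le_mul_of_nonneg_left hab hμ)]
  rw [show (fun x => g x - μ * (f x - a)) = (fun x => (g x - μ * f x) + μ * a) from
    funext fun x => by ring]
  exact mInf_add_const _ _

lemma elem_eq2 (hab : a ≤ b) {μ : ℝ} (hμ : 0 ≤ μ) (g : X → ℝ) :
    mInf (fun x => g x - μ * (-f x - (-b)))
      = mInf (fun x => g x - (-μ) * f x) + min ((-μ) * a) ((-μ) * b) := by
  have hmin : min ((-μ) * a) ((-μ) * b) = (-μ) * b :=
    min_eq_right (mul_le_mul_of_nonpos_left hab (by linarith))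
  rw [hmin]
  rw [show (fun x => g x - μ * (-f x - (-b))) = (fun x => (g x - (-μ) * f x) + (-μ) * b) from
    funext fun x => by ring]
  exact mInf_add_const _ _

lemma max_eq_sSup_T (hab : a ≤ b) (h1 : mInf f ≤ a) (h2 : b ≤ mSup f) (g : X → ℝ) :
    max (lowerGamma f a g) (lowerGamma (fun x => -f x) (-b) g) = sSup (T f a b g) := by
  have hS1 : lowerGamma f a g
      = sSup {c : ℝ | ∃ μ : ℝ, 0 ≤ μ ∧ c = mInf (fun x => g x - μ * (f x - a))} := rfl
  have hS2 : lowerGamma (fun x => -f x) (-b) g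
      = sSup {c : ℝ | ∃ μ : ℝ, 0 ≤ μ ∧ c = mInf (fun x => g x - μ * (-f x - (-b)))} := rfl
  set S1 : Set ℝ := {c : ℝ | ∃ μ : ℝ, 0 ≤ μ ∧ c = mInf (fun x => g x - μ * (f x - a))}
  set S2 : Set ℝ := {c : ℝ | ∃ μ : ℝ, 0 ≤ μ ∧ c = mInf (fun x => g x - μ * (-f x - (-b)))}
  have hunion : S1 ∪ S2 = T f a b g := by
    ext c
    constructor
    · rintro (⟨μ, hμ, rfl⟩ | ⟨μ, hμ, rfl⟩)
      · exact ⟨μ, elem_eq1 hab hμ g⟩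
      · exact ⟨-μ, elem_eq2 hab hμ g⟩
    · rintro ⟨μ, rfl⟩
      rcases le_or_gt 0 μ with hμ | hμ
      · exact Or.inl ⟨μ, hμ, (elem_eq1 hab hμ g).symm⟩
      · refine Or.inr ⟨-μ, by linarith, ?_⟩
        have h := (elem_eq2 (f := f) hab (μ := -μ) (by linarith : (0:ℝ) ≤ -μ) g).symm
        simpa using h
  have hTbdd := T_bdd hab h1 h2 g
  have hb1 : BddAbove S1 := hTbdd.mono (by rw [← hunion]; exact Set.subset_union_left)
  have hb2 : BddAbove S2 := hTbdd.mono (by rw [← hunion]; exact Set.subset_union_right)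
  have hn1 : S1.Nonempty := ⟨_, 0, le_refl 0, rfl⟩
  have hn2 : S2.Nonempty := ⟨_, 0, le_refl 0, rfl⟩
  rw [hS1, hS2, ← hunion, csSup_union hb1 hn1 hb2 hn2]

lemma elem_scale (α : ℝ) (hα : 0 ≤ α) (μ : ℝ) (g : X → ℝ) :
    α * (mInf (fun x => g x - μ * f x) + min (μ * a) (μ * b))
      = mInf (fun x => α * g x - (α * μ) * f x) + min ((α * μ) * a) ((α * μ) * b) := by
  rw [mul_add, mul_min_of_nonneg _ _ hα]
  congr 1
  · rw [← mInf_smul α hα]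
    congr 1
    funext x; ring
  · congr 1 <;> ring

lemma Eall_hom (hab : a ≤ b) (h1 : mInf f ≤ a) (h2 : b ≤ mSup f) (α : ℝ) (hα : 0 ≤ α)
    (g : X → ℝ) :
    sSup (T f a b (fun x => α * g x)) = α * sSup (T f a b g) := by
  rcases eq_or_lt_of_le hα with h0 | h0
  · -- α = 0
    rw [← h0, zero_mul]
    have hT0 : T f a b (fun x : X => (0:ℝ) * g x) = T f a b (fun _ : X => (0:ℝ)) := by
      simp only [zero_mul]
    rw [hT0]
    apply le_antisymm
    · apply csSup_le (T_nonempty _)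
      intro c hc
      have := T_elem_le hab h1 h2 (fun _ : X => (0:ℝ)) c hc
      have hs : mSup (fun _ : X => (0:ℝ)) = 0 := by
        obtain ⟨x, hx⟩ := exists_mSup (fun _ : X => (0:ℝ))
        simpa using hx
      linarith
    · have := le_csSup (T_bdd hab h1 h2 (fun _ : X => (0:ℝ))) (mInf_mem_T (fun _ : X => (0:ℝ)))
      have hi : mInf (fun _ : X => (0:ℝ)) = 0 := by
        obtain ⟨x, hx⟩ := exists_mInf (fun _ : X => (0:ℝ))
        simpa using hx
      linarith
  · -- α > 0
    apply le_antisymm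
    · apply csSup_le (T_nonempty _)
      rintro c ⟨μ, rfl⟩
      have hkey : mInf (fun x => α * g x - μ * f x) + min (μ * a) (μ * b)
          = α * (mInf (fun x => g x - (μ / α) * f x) + min ((μ / α) * a) ((μ / α) * b)) := by
        rw [elem_scale α hα (μ / α) g, mul_div_cancel₀ _ (ne_of_gt h0)]
      rw [hkey]
      exact mul_le_mul_of_nonneg_left
        (le_csSup (T_bdd hab h1 h2 g) ⟨μ / α, rfl⟩) hα
    · have hle : sSup (T f a b g) ≤ sSup (T f a b (fun x => α * g x)) / α := by
        apply csSup_le (T_nonempty g)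
        rintro c ⟨μ, rfl⟩
        rw [le_div_iff₀ h0, mul_comm]
        exact le_csSup (T_bdd hab h1 h2 _) ⟨α * μ, (elem_scale α hα μ g).symm ▸ rfl⟩
      calc α * sSup (T f a b g) ≤ α * (sSup (T f a b (fun x => α * g x)) / α) :=
            mul_le_mul_of_nonneg_left hle hα
        _ = sSup (T f a b (fun x => α * g x)) := by field_simp

lemma Eall_superadd (hab : a ≤ b) (h1 : mInf f ≤ a) (h2 : b ≤ mSup f) (g1 g2 : X → ℝ) :
    sSup (T f a b g1) + sSup (T f a b g2) ≤ sSup (T f a b (fun x => g1 x + g2 x)) := by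
  set B := sSup (T f a b (fun x => g1 x + g2 x)) with hB
  have key : ∀ c1 ∈ T f a b g1, ∀ c2 ∈ T f a b g2, c1 + c2 ≤ B := by
    rintro c1 ⟨μ1, rfl⟩ c2 ⟨μ2, rfl⟩
    have hmem : mInf (fun x => (g1 x + g2 x) - (μ1 + μ2) * f x)
        + min ((μ1 + μ2) * a) ((μ1 + μ2) * b) ∈ T f a b (fun x => g1 x + g2 x) :=
      ⟨μ1 + μ2, rfl⟩
    have hm : mInf (fun x => g1 x - μ1 * f x) + mInf (fun x => g2 x - μ2 * f x)
        ≤ mInf (fun x => (g1 x + g2 x) - (μ1 + μ2) * f x) := by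
      apply le_mInf
      intro x
      have e1 := mInf_le (fun x => g1 x - μ1 * f x) x
      have e2 := mInf_le (fun x => g2 x - μ2 * f x) x
      have : (g1 x + g2 x) - (μ1 + μ2) * f x
          = (g1 x - μ1 * f x) + (g2 x - μ2 * f x) := by ring
      rw [this]
      exact add_le_add e1 e2
    have hc : min (μ1 * a) (μ1 * b) + min (μ2 * a) (μ2 * b)
        ≤ min ((μ1 + μ2) * a) ((μ1 + μ2) * b) := by
      apply le_min
      · rw [add_mul]; exact add_le_add (min_le_left _ _) (min_le_left _ _)
      · rw [add_mul]; exact add_le_add (min_le_right _ _) (min_le_right _ _)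
    have := le_csSup (T_bdd hab h1 h2 (fun x => g1 x + g2 x)) hmem
    linarith
  have step : ∀ c1 ∈ T f a b g1, sSup (T f a b g2) ≤ B - c1 := by
    intro c1 hc1
    apply csSup_le (T_nonempty g2)
    intro c2 hc2
    linarith [key c1 hc1 c2 hc2]
  have : sSup (T f a b g1) ≤ B - sSup (T f a b g2) := by
    apply csSup_le (T_nonempty g1)
    intro c1 hc1
    linarith [step c1 hc1]
  linarith

lemma Eall_f (hab : a ≤ b) (h1 : mInf f ≤ a) (h2 : b ≤ mSup f) :
    sSup (T f a b f) = a := by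
  apply le_antisymm
  · apply csSup_le (T_nonempty f)
    rintro c ⟨μ, rfl⟩
    rcases le_or_gt μ 1 with hμ1 | hμ1
    · obtain ⟨x, hx⟩ := exists_mInf f
      have hfa : f x ≤ a := by rw [← hx]; exact h1
      have e1 : mInf (fun x => f x - μ * f x) ≤ f x - μ * f x := mInf_le _ x
      rcases le_or_gt 0 μ with hμ0 | hμ0
      · have h4 : min (μ * a) (μ * b) ≤ μ * a := min_le_left _ _
        nlinarith
      · have h4 : min (μ * a) (μ * b) ≤ μ * b := min_le_right _ _
        nlinarith
    · obtain ⟨x, hx⟩ := exists_mSup f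
      have hfb : b ≤ f x := by rw [← hx]; exact h2
      have e1 : mInf (fun x => f x - μ * f x) ≤ f x - μ * f x := mInf_le _ x
      have h4 : min (μ * a) (μ * b) ≤ μ * a := min_le_left _ _
      nlinarith
  · apply le_csSup (T_bdd hab h1 h2 f)
    refine ⟨1, ?_⟩
    have hz : (fun x : X => f x - 1 * f x) = fun _ : X => (0:ℝ) := funext fun x => by ring
    rw [hz]
    have hi : mInf (fun _ : X => (0:ℝ)) = 0 := by
      obtain ⟨x, hx⟩ := exists_mInf (fun _ : X => (0:ℝ))
      simpa using hx
    rw [hi, one_mul, one_mul, min_eq_left hab, zero_add]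

lemma Eall_negf (hab : a ≤ b) (h1 : mInf f ≤ a) (h2 : b ≤ mSup f) :
    sSup (T f a b (fun x => -f x)) = -b := by
  apply le_antisymm
  · apply csSup_le (T_nonempty _)
    rintro c ⟨μ, rfl⟩
    rcases le_or_gt (-1) μ with hμ1 | hμ1
    · obtain ⟨x, hx⟩ := exists_mSup f
      have hfb : b ≤ f x := by rw [← hx]; exact h2
      have e1 : mInf (fun x => -f x - μ * f x) ≤ -f x - μ * f x := mInf_le _ x
      rcases le_or_gt 0 μ with hμ0 | hμ0
      · have h4 : min (μ * a) (μ * b) ≤ μ * a := min_le_left _ _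
        nlinarith
      · have h4 : min (μ * a) (μ * b) ≤ μ * b := min_le_right _ _
        nlinarith
    · obtain ⟨x, hx⟩ := exists_mInf f
      have hfa : f x ≤ a := by rw [← hx]; exact h1
      have e1 : mInf (fun x => -f x - μ * f x) ≤ -f x - μ * f x := mInf_le _ x
      have h4 : min (μ * a) (μ * b) ≤ μ * b := min_le_right _ _
      nlinarith
  · apply le_csSup (T_bdd hab h1 h2 _)
    refine ⟨-1, ?_⟩
    have hz : (fun x : X => -f x - (-1) * f x) = fun _ : X => (0:ℝ) := funext fun x => by ring
    rw [hz]
    have hi : mInf (fun _ : X => (0:ℝ)) = 0 := by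
      obtain ⟨x, hx⟩ := exists_mInf (fun _ : X => (0:ℝ))
      simpa using hx
    have hmin : min ((-1) * a) ((-1) * b) = -b := by
      rw [neg_one_mul, neg_one_mul]
      exact min_eq_right (neg_le_neg hab)
    rw [hi, hmin, zero_add]

lemma Eall_dom (hab : a ≤ b) (E' : (X → ℝ) → ℝ) (hE' : IsCoherent E')
    (ha : a ≤ E' f) (hb : upperE E' f ≤ b) (g : X → ℝ)
    (h1 : mInf f ≤ a) (h2 : b ≤ mSup f) :
    sSup (T f a b g) ≤ E' g := by
  obtain ⟨hE1, hE2, hE3⟩ := hE'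
  apply csSup_le (T_nonempty g)
  rintro c ⟨μ, rfl⟩
  have key : E' (fun x => g x - μ * f x) + E' (fun x => μ * f x) ≤ E' g := by
    have h := hE3 (fun x => g x - μ * f x) (fun x => μ * f x)
    have heq : (fun x => (g x - μ * f x) + μ * f x) = g := funext fun x => by ring
    rw [heq] at h
    exact h
  have hlow : mInf (fun x => g x - μ * f x) ≤ E' (fun x => g x - μ * f x) := hE1 _
  have hmu : min (μ * a) (μ * b) ≤ E' (fun x => μ * f x) := by
    rcases le_or_gt 0 μ with hμ | hμ
    · rw [hE2 f μ hμ]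
      exact (min_le_left _ _).trans (mul_le_mul_of_nonneg_left ha hμ)
    · have heq : (fun x => μ * f x) = (fun x => (-μ) * (-f x)) := funext fun x => by ring
      rw [heq, hE2 (fun x => -f x) (-μ) (by linarith)]
      have hnb : -b ≤ E' (fun x => -f x) := by
        unfold upperE at hb
        linarith
      have : (-μ) * (-b) ≤ (-μ) * E' (fun x => -f x) :=
        mul_le_mul_of_nonneg_left hnb (by linarith)
      have h4 : min (μ * a) (μ * b) ≤ μ * b := min_le_right _ _
      nlinarith
  linarith

end Stmt19Aux

open Stmt19Aux in
/-- For a gamble `f` and a nonempty closed interval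
`[a, b] ⊆ [min f, max f]`, the map `E_{I,f}(g) = max{E_{a,f}(g), E_{−b,−f}(g)}`
is a coherent lower expectation with `E_{I,f}(f) = a` and `Ē_{I,f}(f) = b`, and
it is dominated by every coherent lower expectation `E'` with `a ≤ E'(f)` and
`Ē'(f) ≤ b`. -/
theorem stmt_19 {X : Type} [Fintype X] [Nonempty X]
    (f : X → ℝ) (a b : ℝ) (hab : a ≤ b)
    (h1 : Finset.univ.inf' Finset.univ_nonempty f ≤ a)
    (h2 : b ≤ Finset.univ.sup' Finset.univ_nonempty f) :
    IsCoherent (fun g : X → ℝ =>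
      max (lowerGamma f a g) (lowerGamma (fun x => -f x) (-b) g)) ∧
    max (lowerGamma f a f) (lowerGamma (fun x => -f x) (-b) f) = a ∧
    upperE (fun g : X → ℝ =>
      max (lowerGamma f a g) (lowerGamma (fun x => -f x) (-b) g)) f = b ∧
    ∀ E' : (X → ℝ) → ℝ, IsCoherent E' → a ≤ E' f → upperE E' f ≤ b →
      ∀ g : X → ℝ,
        max (lowerGamma f a g) (lowerGamma (fun x => -f x) (-b) g) ≤ E' g := by
  have h1' : mInf f ≤ a := h1
  have h2' : b ≤ mSup f := h2
  have hm : ∀ g : X → ℝ,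
      max (lowerGamma f a g) (lowerGamma (fun x => -f x) (-b) g) = sSup (T f a b g) :=
    max_eq_sSup_T hab h1' h2'
  refine ⟨⟨?_, ?_, ?_⟩, ?_, ?_, ?_⟩
  · intro g
    show Finset.univ.inf' Finset.univ_nonempty g
      ≤ max (lowerGamma f a g) (lowerGamma (fun x => -f x) (-b) g)
    rw [hm g]
    exact le_csSup (T_bdd hab h1' h2' g) (mInf_mem_T g)
  · intro g α hα
    show max (lowerGamma f a (fun x => α * g x))
        (lowerGamma (fun x => -f x) (-b) (fun x => α * g x))
      = α * max (lowerGamma f a g) (lowerGamma (fun x => -f x) (-b) g)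
    rw [hm g, hm (fun x => α * g x)]
    exact Eall_hom hab h1' h2' α hα g
  · intro g1 g2
    show max (lowerGamma f a g1) (lowerGamma (fun x => -f x) (-b) g1)
        + max (lowerGamma f a g2) (lowerGamma (fun x => -f x) (-b) g2)
      ≤ max (lowerGamma f a (fun x => g1 x + g2 x))
          (lowerGamma (fun x => -f x) (-b) (fun x => g1 x + g2 x))
    rw [hm g1, hm g2, hm (fun x => g1 x + g2 x)]
    exact Eall_superadd hab h1' h2' g1 g2
  · rw [hm f]
    exact Eall_f hab h1' h2'
  · show -(max (lowerGamma f a (fun x => -f x)) (lowerGamma (fun x => -f x) (-b) (fun x => -f x))) = b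
    rw [hm (fun x => -f x), Eall_negf hab h1' h2']
    ring
  · intro E' hE' ha hb g
    rw [hm g]
    exact Eall_dom hab E' hE' ha hb g h1' h2'
end
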